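/- arXiv:1205.6043 — 4 statements merged into one kernel-verified Lean document; each statement's English description precedes it below -/
import Mathlib

section
/- Under Efron's BCD(p) with m_j = j/2 (perfect balance after j assignments, j even), the conditional distribution of N_1(n) given N_1(j) = j/2 equals the unconditional distribution of N_1(n−j) shifted by j/2: P(N_1(n)=n_1 | N_1(j)=j/2) = P(N_1(n−j) = n_1 − j/2) for j/2 ≤ n_1 ≤ n − j/2. -/
open Finset

/-- Number of treatment-1 assignments among the first `j` patients. -/
def count1 {n : ℕ} (t : Fin n → Bool) (j : ℕ) : ℕ :=
  ((Finset.univ : Finset (Fin n)).filter (fun i : Fin n => (i : ℕ) < j ∧ t i = true)).card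

/-- Probability of an assignment sequence under the restricted randomization
procedure `φ`, where `φ j m = P(T_{j+1} = 1 | N_1(j) = m)`. -/
noncomputable def seqProb {n : ℕ} (φ : ℕ → ℕ → ℝ) (t : Fin n → Bool) : ℝ :=
  ∏ i : Fin n,
    if t i = true then φ (i : ℕ) (count1 t (i : ℕ)) else 1 - φ (i : ℕ) (count1 t (i : ℕ))

open Classical in
/-- Probability of an event under the randomization procedure `φ`. -/
noncomputable def pr {n : ℕ} (φ : ℕ → ℕ → ℝ) (S : Set (Fin n → Bool)) : ℝ :=
  ∑ t : Fin n → Bool, if t ∈ S then seqProb φ t else 0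

/-- Conditional probability `P(A | B)` under the randomization procedure `φ`. -/
noncomputable def condPr {n : ℕ} (φ : ℕ → ℕ → ℝ) (A B : Set (Fin n → Bool)) : ℝ :=
  pr φ (A ∩ B) / pr φ B

/-- Efron's biased coin design: `efron p j m = P(T_{j+1} = 1 | N_1(j) = m)`. -/
noncomputable def efron (p : ℝ) (j m : ℕ) : ℝ :=
  if 2 * m = j then 1/2 else if 2 * m < j then p else 1 - p

lemma count1_eq_sum {n : ℕ} (t : Fin n → Bool) (k : ℕ) :
    count1 t k = ∑ i : Fin n, if (i : ℕ) < k ∧ t i = true then 1 else 0 := by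
  rw [count1, Finset.card_filter]

lemma count1_snoc {n : ℕ} (t : Fin n → Bool) (x : Bool) (k : ℕ) (hk : k ≤ n) :
    count1 (Fin.snoc t x : Fin (n+1) → Bool) k = count1 t k := by
  rw [count1_eq_sum, count1_eq_sum, Fin.sum_univ_castSucc]
  simp only [Fin.snoc_castSucc, Fin.coe_castSucc, Fin.snoc_last, Fin.val_last]
  rw [if_neg (by omega), add_zero]

lemma count1_append_left {j k : ℕ} (a : Fin j → Bool) (b : Fin k → Bool) (i : ℕ) (hi : i ≤ j) :
    count1 (Fin.append a b) i = count1 a i := by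
  rw [count1_eq_sum, count1_eq_sum, Fin.sum_univ_add]
  simp only [Fin.append_left, Fin.append_right, Fin.coe_castAdd, Fin.coe_natAdd]
  have : ∀ x : Fin k, (if j + (x : ℕ) < i ∧ b x = true then (1:ℕ) else 0) = 0 := by
    intro x
    rw [if_neg]
    rintro ⟨h1, -⟩; omega
  rw [Finset.sum_congr rfl fun x _ => this x, Finset.sum_const_zero, add_zero]

lemma count1_append_add {j k : ℕ} (a : Fin j → Bool) (b : Fin k → Bool) (i : ℕ) :
    count1 (Fin.append a b) (j + i) = count1 a j + count1 b i := by
  rw [count1_eq_sum, count1_eq_sum, count1_eq_sum, Fin.sum_univ_add]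
  simp only [Fin.append_left, Fin.append_right, Fin.coe_castAdd, Fin.coe_natAdd]
  congr 1
  · refine Finset.sum_congr rfl fun x _ => ?_
    have h1 : ((x:ℕ) < j + i) := by omega
    have h2 : ((x:ℕ) < j) := x.isLt
    simp [h1, h2]
  · refine Finset.sum_congr rfl fun x _ => ?_
    have : (j + (x:ℕ) < j + i) ↔ ((x:ℕ) < i) := by omega
    simp [this]

lemma efron_shift (p : ℝ) (j m i c : ℕ) (hj2 : 2*m = j) :
    efron p (j + i) (m + c) = efron p i c := by
  unfold efron
  rcases Nat.lt_trichotomy (2*c) i with h|h|h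
  · rw [if_neg (by omega), if_pos (by omega), if_neg (by omega), if_pos (by omega)]
  · rw [if_pos (by omega), if_pos (by omega)]
  · rw [if_neg (by omega), if_neg (by omega), if_neg (by omega), if_neg (by omega)]

def snocEquiv (n : ℕ) : (Fin n → Bool) × Bool ≃ (Fin (n+1) → Bool) where
  toFun x := Fin.snoc x.1 x.2
  invFun t := (fun i => t i.castSucc, t (Fin.last n))
  left_inv x := by
    obtain ⟨a, b⟩ := x
    simp only [Fin.snoc_castSucc, Fin.snoc_last]
  right_inv t := by
    funext i
    refine Fin.lastCases ?_ ?_ i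
    · simp
    · intro i; simp

lemma seqProb_snoc {n : ℕ} (φ : ℕ → ℕ → ℝ) (t : Fin n → Bool) (x : Bool) :
    seqProb φ (Fin.snoc t x : Fin (n+1) → Bool)
      = seqProb φ t * (if x = true then φ n (count1 t n) else 1 - φ n (count1 t n)) := by
  rw [seqProb, seqProb, Fin.prod_univ_castSucc]
  congr 1
  · refine Finset.prod_congr rfl fun i _ => ?_
    rw [Fin.snoc_castSucc]
    simp only [Fin.coe_castSucc]
    rw [count1_snoc t x i (le_of_lt i.isLt)]
  · rw [Fin.snoc_last]
    simp only [Fin.val_last]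
    rw [count1_snoc t x n le_rfl]

lemma sum_seqProb (φ : ℕ → ℕ → ℝ) : ∀ n, ∑ t : Fin n → Bool, seqProb φ t = 1 := by
  intro n
  induction n with
  | zero =>
    rw [show (Finset.univ : Finset (Fin 0 → Bool)) = {fun i => i.elim0} from by
      apply Finset.eq_of_subset_of_card_le
      · intro t _; simp [Finset.mem_singleton]; funext i; exact i.elim0
      · simp]
    simp [seqProb]
  | succ n ih =>
    rw [← Equiv.sum_comp (snocEquiv n), Fintype.sum_prod_type]
    simp only [snocEquiv, Equiv.coe_fn_mk, seqProb_snoc]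
    have : ∀ t : Fin n → Bool,
        ∑ x : Bool, seqProb φ t * (if x = true then φ n (count1 t n) else 1 - φ n (count1 t n))
          = seqProb φ t := by
      intro t
      rw [Fintype.sum_bool]
      simp only [if_true, Bool.false_eq_true, if_false]
      ring
    rw [Finset.sum_congr rfl fun t _ => this t, ih]

lemma seqProb_append {j k : ℕ} (p : ℝ) (m : ℕ) (hj2 : 2*m = j)
    (a : Fin j → Bool) (ha : count1 a j = m) (b : Fin k → Bool) :
    seqProb (efron p) (Fin.append a b) = seqProb (efron p) a * seqProb (efron p) b := by
  rw [seqProb, seqProb, seqProb, Fin.prod_univ_add]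
  congr 1
  · refine Finset.prod_congr rfl fun i _ => ?_
    rw [Fin.append_left]
    simp only [Fin.coe_castAdd]
    rw [count1_append_left a b i (le_of_lt i.isLt)]
  · refine Finset.prod_congr rfl fun i _ => ?_
    rw [Fin.append_right]
    simp only [Fin.coe_natAdd]
    rw [count1_append_add a b i, ha, efron_shift p j m i (count1 b i) hj2]

def appendEquiv (j k : ℕ) : (Fin j → Bool) × (Fin k → Bool) ≃ (Fin (j+k) → Bool) where
  toFun x := Fin.append x.1 x.2
  invFun t := (fun i => t (Fin.castAdd k i), fun i => t (Fin.natAdd j i))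
  left_inv x := by
    obtain ⟨a, b⟩ := x
    simp only [Fin.append_left, Fin.append_right]
  right_inv t := by
    funext i
    refine Fin.addCases ?_ ?_ i
    · intro i; exact Fin.append_left _ _ i
    · intro i; exact Fin.append_right _ _ i

/-- Theorem 2.2, part (2): under Efron's BCD(p), at a perfectly
balanced interim point `N_1(j) = j/2` (with `j = 2m` even), the process
regenerates: `P(N_1(n)=n_1 | N_1(j)=j/2) = P(N_1(n−j) = n_1 − j/2)`, the latter
being the unconditional distribution for a trial of `n − j` patients. -/
theorem bcd_regeneration (n j m n1 : ℕ) (p : ℝ) (hp : 1 / 2 ≤ p) (hp1 : p ≤ 1)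
    (hj1 : 1 ≤ j) (hjn : j < n) (hj2 : 2 * m = j)
    (hlo : m ≤ n1) (hhi : n1 ≤ n - m)
    (hpos : 0 < pr (efron p) {t : Fin n → Bool | count1 t j = m}) :
    condPr (efron p) {t : Fin n → Bool | count1 t n = n1}
        {t : Fin n → Bool | count1 t j = m}
      = pr (efron p) {t : Fin (n - j) → Bool | count1 t (n - j) = n1 - m} := by
  obtain ⟨k, rfl⟩ : ∃ k, n = j + k := ⟨n - j, by omega⟩
  have hk : j + k - j = k := by omega
  rw [hk]
  have hden : pr (efron p) {t : Fin (j+k) → Bool | count1 t j = m}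
      = pr (efron p) {a : Fin j → Bool | count1 a j = m} := by
    rw [pr, ← Equiv.sum_comp (appendEquiv j k), Fintype.sum_prod_type, pr]
    refine Finset.sum_congr rfl fun a _ => ?_
    simp only [appendEquiv, Equiv.coe_fn_mk, Set.mem_setOf_eq,
      count1_append_left a _ j le_rfl]
    by_cases ha : count1 a j = m
    · simp only [ha, if_pos trivial, if_true]
      rw [Finset.sum_congr rfl fun b _ => seqProb_append p m hj2 a ha b,
        ← Finset.mul_sum, sum_seqProb, mul_one]
    · simp [ha]
  have hnum : pr (efron p)
        ({t : Fin (j+k) → Bool | count1 t (j+k) = n1} ∩ {t | count1 t j = m})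
      = pr (efron p) {a : Fin j → Bool | count1 a j = m}
        * pr (efron p) {b : Fin k → Bool | count1 b k = n1 - m} := by
    rw [pr, ← Equiv.sum_comp (appendEquiv j k), Fintype.sum_prod_type, pr, pr,
      Finset.sum_mul_sum]
    refine Finset.sum_congr rfl fun a _ => ?_
    refine Finset.sum_congr rfl fun b _ => ?_
    simp only [appendEquiv, Equiv.coe_fn_mk, Set.mem_inter_iff, Set.mem_setOf_eq,
      count1_append_left a b j le_rfl, count1_append_add a b k]
    by_cases ha : count1 a j = m
    · have hc : count1 b k ≤ k := by
        rw [count1]; exact le_trans (Finset.card_filter_le _ _) (by simp)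
      by_cases hb : count1 b k = n1 - m
      · rw [if_pos ⟨by omega, ha⟩, if_pos ha, if_pos hb,
          seqProb_append p m hj2 a ha b]
      · rw [if_neg, if_pos ha, if_neg hb, mul_zero]
        rintro ⟨h1, -⟩; omega
    · rw [if_neg (by rintro ⟨-, h⟩; exact ha h), if_neg ha, zero_mul]
  rw [condPr, hnum, hden]
  rw [hden] at hpos
  exact mul_div_cancel_left₀ _ (ne_of_gt hpos)
end

section
/- If h(t) = Π_{j=0}^{n−1} p_{j+1}^{t_{j+1}} (1−p_{j+1})^{1−t_{j+1}} with p_{j+1} = P(T_{j+1}=1 | N_1(j)=m_j(t), N_1(n)=n_1) defined via Theorem 2.1, then h is exactly the conditional probability mass function of T given N_1(n)=n_1: for every t ∈ {0,1}^n with Σ t_i = n_1, h(t) = P(T = t)/P(N_1(n)=n_1), and Σ_{t: Σt_i=n_1} h(t) = 1. -/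
open Finset

lemma count1_zero {n : ℕ} (t : Fin n → Bool) : count1 t 0 = 0 := by
  simp [count1]

lemma count1_congr {n : ℕ} {s t : Fin n → Bool} {j : ℕ}
    (h : ∀ i : Fin n, (i : ℕ) < j → s i = t i) : count1 s j = count1 t j := by
  unfold count1
  congr 1
  apply Finset.filter_congr
  intro i _
  by_cases hi : (i : ℕ) < j
  · simp [hi, h i hi]
  · simp [hi]

lemma count1_succ {n : ℕ} (t : Fin n → Bool) {j : ℕ} (hj : j < n) :
    count1 t (j + 1) = count1 t j + (if t ⟨j, hj⟩ = true then 1 else 0) := by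
  unfold count1
  rw [show (Finset.univ.filter (fun i : Fin n => (i : ℕ) < j + 1 ∧ t i = true))
      = (Finset.univ.filter (fun i : Fin n => (i : ℕ) < j ∧ t i = true)) ∪
        (Finset.univ.filter (fun i : Fin n => (i : ℕ) = j ∧ t i = true)) from ?_]
  · rw [Finset.card_union_of_disjoint (by
      rw [Finset.disjoint_left]
      intro i h1 h2
      simp only [Finset.mem_filter] at h1 h2
      omega)]
    congr 1
    by_cases ht : t ⟨j, hj⟩ = true
    · rw [if_pos ht]
      rw [show (Finset.univ.filter (fun i : Fin n => (i : ℕ) = j ∧ t i = true)) = {⟨j, hj⟩} from ?_]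
      · simp
      · ext i
        simp only [Finset.mem_filter, Finset.mem_univ, true_and, Finset.mem_singleton]
        constructor
        · rintro ⟨h1, _⟩; exact Fin.ext h1
        · rintro rfl; exact ⟨rfl, ht⟩
    · rw [if_neg ht]
      rw [Finset.card_eq_zero]
      ext i
      simp only [Finset.mem_filter, Finset.mem_univ, true_and, Finset.notMem_empty, iff_false]
      rintro ⟨h1, h2⟩
      exact ht (by rwa [show (⟨j, hj⟩ : Fin n) = i from Fin.ext h1.symm])
  · ext i
    simp only [Finset.mem_filter, Finset.mem_union, Finset.mem_univ, true_and]
    constructor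
    · rintro ⟨h1, h2⟩
      rcases Nat.lt_succ_iff_lt_or_eq.mp h1 with h | h
      · exact Or.inl ⟨h, h2⟩
      · exact Or.inr ⟨h, h2⟩
    · rintro (⟨h1, h2⟩ | ⟨h1, h2⟩)
      · exact ⟨Nat.lt_succ_of_lt h1, h2⟩
      · exact ⟨by omega, h2⟩

/-- The factor contributed by patient `i` (as a function of `i : ℕ`). -/
noncomputable def bfac {n : ℕ} (φ : ℕ → ℕ → ℝ) (t : Fin n → Bool) (i : ℕ) : ℝ :=
  if h : i < n then
    (if t ⟨i, h⟩ = true then φ i (count1 t i) else 1 - φ i (count1 t i))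
  else 1

/-- Probability of the first `j` assignments of `t`. -/
noncomputable def prefProd {n : ℕ} (φ : ℕ → ℕ → ℝ) (t : Fin n → Bool) (j : ℕ) : ℝ :=
  ∏ i ∈ Finset.range j, bfac φ t i

lemma seqProb_eq_prefProd {n : ℕ} (φ : ℕ → ℕ → ℝ) (t : Fin n → Bool) :
    seqProb φ t = prefProd φ t n := by
  unfold seqProb prefProd
  rw [← Fin.prod_univ_eq_prod_range (fun i => bfac φ t i) n]
  apply Finset.prod_congr rfl
  intro i _
  rw [bfac, dif_pos i.isLt]

lemma bfac_nonneg {n : ℕ} {φ : ℕ → ℕ → ℝ} (hφ : ∀ j m, 0 ≤ φ j m ∧ φ j m ≤ 1)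
    (t : Fin n → Bool) (i : ℕ) : 0 ≤ bfac φ t i := by
  unfold bfac
  split
  · split
    · exact (hφ _ _).1
    · linarith [(hφ i (count1 t i)).2]
  · norm_num

lemma prefProd_nonneg {n : ℕ} {φ : ℕ → ℕ → ℝ} (hφ : ∀ j m, 0 ≤ φ j m ∧ φ j m ≤ 1)
    (t : Fin n → Bool) (j : ℕ) : 0 ≤ prefProd φ t j :=
  Finset.prod_nonneg fun i _ => bfac_nonneg hφ t i

lemma seqProb_nonneg {n : ℕ} {φ : ℕ → ℕ → ℝ} (hφ : ∀ j m, 0 ≤ φ j m ∧ φ j m ≤ 1)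
    (t : Fin n → Bool) : 0 ≤ seqProb φ t := by
  rw [seqProb_eq_prefProd]; exact prefProd_nonneg hφ t n

lemma bfac_congr {n : ℕ} (φ : ℕ → ℕ → ℝ) {s t : Fin n → Bool} {j : ℕ}
    (h : ∀ i : Fin n, (i : ℕ) < j → s i = t i) {i : ℕ} (hi : i < j) :
    bfac φ s i = bfac φ t i := by
  unfold bfac
  split
  · rename_i hin
    have hc : count1 s i = count1 t i := count1_congr (fun i' hi' => h i' (by omega))
    rw [h ⟨i, hin⟩ hi, hc]
  · rfl

lemma prefProd_congr {n : ℕ} (φ : ℕ → ℕ → ℝ) {s t : Fin n → Bool} {j : ℕ}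
    (h : ∀ i : Fin n, (i : ℕ) < j → s i = t i) : prefProd φ s j = prefProd φ t j := by
  unfold prefProd
  exact Finset.prod_congr rfl fun i hi => bfac_congr φ h (Finset.mem_range.mp hi)

lemma prefProd_succ {n : ℕ} (φ : ℕ → ℕ → ℝ) (t : Fin n → Bool) (j : ℕ) :
    prefProd φ t (j + 1) = prefProd φ t j * bfac φ t j :=
  Finset.prod_range_succ _ _

/-- `G φ ψ d j m`: expected value of `ψ` of the final count, starting at time `j`
with current count `m`, with `d` steps remaining. -/
noncomputable def G (φ : ℕ → ℕ → ℝ) (ψ : ℕ → ℝ) : ℕ → ℕ → ℕ → ℝ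
  | 0, _, m => ψ m
  | d + 1, j, m => φ j m * G φ ψ d (j + 1) (m + 1) + (1 - φ j m) * G φ ψ d (j + 1) m

lemma G_nonneg {φ : ℕ → ℕ → ℝ} (hφ : ∀ j m, 0 ≤ φ j m ∧ φ j m ≤ 1)
    {ψ : ℕ → ℝ} (hψ : ∀ m, 0 ≤ ψ m) : ∀ d j m, 0 ≤ G φ ψ d j m := by
  intro d
  induction d with
  | zero => intro j m; exact hψ m
  | succ d ih =>
    intro j m
    have h1 := (hφ j m).1
    have h2 := (hφ j m).2
    have := ih (j + 1) (m + 1)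
    have := ih (j + 1) m
    unfold G
    nlinarith

lemma G_one {φ : ℕ → ℕ → ℝ} : ∀ d j m, G φ (fun _ => (1 : ℝ)) d j m = 1 := by
  intro d
  induction d with
  | zero => intro j m; rfl
  | succ d ih => intro j m; unfold G; rw [ih, ih]; ring

open Classical in
lemma main_sum {n : ℕ} (φ : ℕ → ℕ → ℝ) (ψ : ℕ → ℝ) :
    ∀ d j, j + d = n → ∀ t : Fin n → Bool,
    (∑ s : Fin n → Bool, if ∀ i : Fin n, (i : ℕ) < j → s i = t i
        then ψ (count1 s n) * seqProb φ s else 0)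
      = prefProd φ t j * G φ ψ d j (count1 t j) := by
  intro d
  induction d with
  | zero =>
    intro j hj t
    have hjn : n = j := by omega
    subst hjn
    have hcond : ∀ s : Fin n → Bool, (∀ i : Fin n, (i : ℕ) < n → s i = t i) ↔ s = t := by
      intro s
      constructor
      · intro hc; funext i; exact hc i i.isLt
      · rintro rfl; intro i _; rfl
    have : (∑ s : Fin n → Bool, if ∀ i : Fin n, (i : ℕ) < n → s i = t i
        then ψ (count1 s n) * seqProb φ s else 0)
        = ∑ s : Fin n → Bool, if s = t then ψ (count1 s n) * seqProb φ s else 0 := by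
      apply Finset.sum_congr rfl
      intro s _
      exact if_congr (hcond s) rfl rfl
    rw [this, Finset.sum_ite_eq' Finset.univ t (fun s => ψ (count1 s n) * seqProb φ s),
      if_pos (Finset.mem_univ t)]
    rw [seqProb_eq_prefProd]
    simp only [G]
    ring
  | succ d ih =>
    intro j hj t
    have hjn : j < n := by omega
    set jf : Fin n := ⟨j, hjn⟩ with hjf
    set X : (Fin n → Bool) → ℝ := fun s => ψ (count1 s n) * seqProb φ s with hX
    have key : ∀ s : Fin n → Bool,
        (if ∀ i : Fin n, (i : ℕ) < j → s i = t i then X s else 0)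
        = (if ∀ i : Fin n, (i : ℕ) < j + 1 → s i = Function.update t jf true i
            then X s else 0)
        + (if ∀ i : Fin n, (i : ℕ) < j + 1 → s i = Function.update t jf false i
            then X s else 0) := by
      intro s
      have agree : ∀ (b : Bool),
          (∀ i : Fin n, (i : ℕ) < j + 1 → s i = Function.update t jf b i)
          ↔ ((∀ i : Fin n, (i : ℕ) < j → s i = t i) ∧ s jf = b) := by
        intro b
        constructor
        · intro hc
          constructor
          · intro i hi
            have := hc i (by omega)
            rwa [Function.update_of_ne (by
              intro he; rw [he] at hi; exact absurd hi (lt_irrefl j)) _ _] at this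
          · have := hc jf (by simp [hjf])
            rwa [Function.update_self] at this
        · rintro ⟨h1, h2⟩ i hi
          by_cases hij : i = jf
          · subst hij; rwa [Function.update_self]
          · rw [Function.update_of_ne hij]
            apply h1
            have : (i : ℕ) ≠ j := fun he => hij (Fin.ext (by simp [hjf, he]))
            omega
      by_cases hc : ∀ i : Fin n, (i : ℕ) < j → s i = t i
      · by_cases hb : s jf = true
        · rw [if_pos hc, if_pos ((agree true).mpr ⟨hc, hb⟩),
            if_neg (fun hcf => by simp [((agree false).mp hcf).2] at hb), add_zero]
        · have hb' : s jf = false := by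
            cases hsj : s jf
            · rfl
            · exact absurd hsj hb
          rw [if_pos hc, if_neg (fun hcf => hb ((agree true).mp hcf).2),
            if_pos ((agree false).mpr ⟨hc, hb'⟩), zero_add]
      · rw [if_neg hc, if_neg (fun hcf => hc ((agree true).mp hcf).1),
          if_neg (fun hcf => hc ((agree false).mp hcf).1), add_zero]
    rw [Finset.sum_congr rfl (fun s _ => key s), Finset.sum_add_distrib]
    have hupd : ∀ (b : Bool), ∀ i : Fin n, (i : ℕ) < j → Function.update t jf b i = t i := by
      intro b i hi
      apply Function.update_of_ne
      intro he; rw [he] at hi; exact absurd hi (lt_irrefl j)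
    have hib : ∀ (b : Bool),
        (∑ s : Fin n → Bool, if ∀ i : Fin n, (i : ℕ) < j + 1 → s i = Function.update t jf b i
            then X s else 0)
        = prefProd φ t j * ((if b then φ j (count1 t j) else 1 - φ j (count1 t j))
            * G φ ψ d (j + 1) (count1 t j + (if b then 1 else 0))) := by
      intro b
      rw [ih (j + 1) (by omega) (Function.update t jf b)]
      have h1 : prefProd φ (Function.update t jf b) (j + 1)
          = prefProd φ t j * (if b then φ j (count1 t j) else 1 - φ j (count1 t j)) := by
        rw [prefProd_succ, prefProd_congr φ (hupd b)]
        congr 1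
        unfold bfac
        rw [dif_pos hjn]
        have hcc : count1 (Function.update t jf b) j = count1 t j := count1_congr (hupd b)
        have : Function.update t jf b ⟨j, hjn⟩ = b := Function.update_self _ _ _
        rw [this, hcc]
      have h2 : count1 (Function.update t jf b) (j + 1)
          = count1 t j + (if b then 1 else 0) := by
        rw [count1_succ _ hjn, count1_congr (hupd b)]
        have : Function.update t jf b ⟨j, hjn⟩ = b := Function.update_self _ _ _
        rw [this]
      rw [h1, h2, mul_assoc]
    rw [hib true, hib false]
    rw [show G φ ψ (d + 1) j (count1 t j)
        = φ j (count1 t j) * G φ ψ d (j + 1) (count1 t j + 1)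
          + (1 - φ j (count1 t j)) * G φ ψ d (j + 1) (count1 t j) from rfl]
    norm_num
    ring

lemma tail_le {n : ℕ} {φ : ℕ → ℕ → ℝ} (hφ : ∀ j m, 0 ≤ φ j m ∧ φ j m ≤ 1) (n1 : ℕ)
    {t : Fin n → Bool} (hA : count1 t n = n1) :
    ∀ d j, j + d = n →
      (∏ i ∈ Finset.Ico j n, bfac φ t i)
        ≤ G φ (fun m => if m = n1 then 1 else 0) d j (count1 t j) := by
  have hψ : ∀ m, (0:ℝ) ≤ if m = n1 then 1 else 0 := by intro m; split <;> norm_num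
  intro d
  induction d with
  | zero =>
    intro j hj
    have : n = j := by omega
    subst this
    rw [Finset.Ico_self, Finset.prod_empty]
    show (1:ℝ) ≤ if count1 t n = n1 then 1 else 0
    rw [if_pos hA]
  | succ d ih =>
    intro j hj
    have hjn : j < n := by omega
    rw [Finset.prod_eq_prod_Ico_succ_bot hjn]
    have step1 : (∏ i ∈ Finset.Ico (j+1) n, bfac φ t i)
        ≤ G φ (fun m => if m = n1 then 1 else 0) d (j+1) (count1 t (j+1)) :=
      ih (j+1) (by omega)
    have h0 : 0 ≤ bfac φ t j := bfac_nonneg hφ t j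
    calc bfac φ t j * ∏ i ∈ Finset.Ico (j+1) n, bfac φ t i
        ≤ bfac φ t j * G φ (fun m => if m = n1 then 1 else 0) d (j+1) (count1 t (j+1)) :=
          mul_le_mul_of_nonneg_left step1 h0
      _ ≤ G φ (fun m => if m = n1 then 1 else 0) (d+1) j (count1 t j) := by
          rw [show G φ (fun m => if m = n1 then 1 else 0) (d+1) j (count1 t j)
            = φ j (count1 t j) * G φ _ d (j+1) (count1 t j + 1)
              + (1 - φ j (count1 t j)) * G φ _ d (j+1) (count1 t j) from rfl]
          unfold bfac
          rw [dif_pos hjn, count1_succ t hjn]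
          have g1 := G_nonneg hφ hψ d (j+1) (count1 t j + 1)
          have g2 := G_nonneg hφ hψ d (j+1) (count1 t j)
          have p1 := (hφ j (count1 t j)).1
          have p2 := (hφ j (count1 t j)).2
          by_cases hb : t ⟨j, hjn⟩ = true
          · rw [if_pos hb, if_pos hb]
            nlinarith
          · rw [if_neg hb, if_neg hb, add_zero]
            nlinarith

def trunc {n : ℕ} (j : ℕ) (t : Fin n → Bool) : Fin n → Bool :=
  fun i => if (i : ℕ) < j then t i else false

lemma trunc_agree {n : ℕ} (j : ℕ) (t : Fin n → Bool) :
    ∀ i : Fin n, (i : ℕ) < j → trunc j t i = t i := fun i hi => if_pos hi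

lemma trunc_idem {n : ℕ} (j : ℕ) (t : Fin n → Bool) : trunc j (trunc j t) = trunc j t := by
  funext i
  unfold trunc
  split <;> rfl

open Classical in
lemma sum_given_count {n : ℕ} (φ : ℕ → ℕ → ℝ) (ψ : ℕ → ℝ) (d j : ℕ) (hd : j + d = n) (m : ℕ) :
    (∑ s : Fin n → Bool, if count1 s j = m then ψ (count1 s n) * seqProb φ s else 0)
      = (∑ p : Fin n → Bool, if trunc j p = p ∧ count1 p j = m then prefProd φ p j else 0)
          * G φ ψ d j m := by
  rw [← Finset.sum_fiberwise_of_maps_to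
    (g := trunc j) (fun s _ => Finset.mem_univ (trunc j s))
    (fun s => if count1 s j = m then ψ (count1 s n) * seqProb φ s else 0)]
  rw [Finset.sum_mul]
  apply Finset.sum_congr rfl
  intro p _
  rw [Finset.sum_filter]
  by_cases hp : trunc j p = p ∧ count1 p j = m
  · rw [if_pos hp]
    have hstep : ∀ s : Fin n → Bool,
        (if trunc j s = p then (if count1 s j = m then ψ (count1 s n) * seqProb φ s else 0) else 0)
        = (if ∀ i : Fin n, (i : ℕ) < j → s i = p i then ψ (count1 s n) * seqProb φ s else 0) := by
      intro s
      by_cases ht : trunc j s = p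
      · have hag : ∀ i : Fin n, (i : ℕ) < j → s i = p i := by
          intro i hi
          rw [← ht]
          exact (trunc_agree j s i hi).symm
        have hcs : count1 s j = m := by rw [count1_congr hag, hp.2]
        rw [if_pos ht, if_pos hcs, if_pos hag]
      · have hag : ¬ ∀ i : Fin n, (i : ℕ) < j → s i = p i := by
          intro hag
          apply ht
          funext i
          by_cases hi : (i : ℕ) < j
          · rw [trunc_agree j s i hi, hag i hi]
          · show (if (i : ℕ) < j then s i else false) = p i
            rw [if_neg hi, ← hp.1]
            show _ = (if (i : ℕ) < j then p i else false)
            rw [if_neg hi]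
        rw [if_neg ht, if_neg hag]
    rw [Finset.sum_congr rfl (fun s _ => hstep s), main_sum φ ψ d j hd p, hp.2]
  · rw [if_neg hp, zero_mul]
    apply Finset.sum_eq_zero
    intro s _
    by_cases ht : trunc j s = p
    · have hip : trunc j p = p := by rw [← ht]; exact trunc_idem j s
      have hag : ∀ i : Fin n, (i : ℕ) < j → s i = p i := by
        intro i hi
        rw [← ht]
        exact (trunc_agree j s i hi).symm
      have hcm : ¬ count1 s j = m := by
        rw [count1_congr hag]
        exact fun hc => hp ⟨hip, hc⟩
      rw [if_pos ht, if_neg hcm]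
    · rw [if_neg ht]

open Classical in
lemma pr_count_eq {n : ℕ} (φ : ℕ → ℕ → ℝ) (d j : ℕ) (hd : j + d = n) (m : ℕ) :
    pr φ {s : Fin n → Bool | count1 s j = m}
      = ∑ p : Fin n → Bool, if trunc j p = p ∧ count1 p j = m then prefProd φ p j else 0 := by
  have h := sum_given_count φ (fun _ => (1:ℝ)) d j hd m
  simp only [one_mul] at h
  rw [G_one, mul_one] at h
  calc pr φ {s : Fin n → Bool | count1 s j = m}
      = ∑ s : Fin n → Bool, if count1 s j = m then seqProb φ s else 0 := by
        unfold pr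
        apply Finset.sum_congr rfl
        intro s _
        by_cases h1 : count1 s j = m <;> simp [Set.mem_setOf_eq, h1]
    _ = _ := h

open Classical in
lemma pr_inter_eq {n : ℕ} (φ : ℕ → ℕ → ℝ) (n1 : ℕ) (d j : ℕ) (hd : j + d = n) (m : ℕ) :
    pr φ ({s : Fin n → Bool | count1 s n = n1} ∩ {s : Fin n → Bool | count1 s j = m})
      = pr φ {s : Fin n → Bool | count1 s j = m}
          * G φ (fun k => if k = n1 then 1 else 0) d j m := by
  have h := sum_given_count φ (fun k => if k = n1 then (1:ℝ) else 0) d j hd m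
  calc pr φ ({s : Fin n → Bool | count1 s n = n1} ∩ {s : Fin n → Bool | count1 s j = m})
      = ∑ s : Fin n → Bool,
          if count1 s j = m then (if count1 s n = n1 then (1:ℝ) else 0) * seqProb φ s else 0 := by
        unfold pr
        apply Finset.sum_congr rfl
        intro s _
        by_cases h1 : count1 s j = m <;> by_cases h2 : count1 s n = n1 <;>
          simp [Set.mem_inter_iff, Set.mem_setOf_eq, h1, h2]
    _ = (∑ p : Fin n → Bool, if trunc j p = p ∧ count1 p j = m then prefProd φ p j else 0)
          * G φ (fun k => if k = n1 then 1 else 0) d j m := h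
    _ = _ := by rw [pr_count_eq φ d j hd m]

open Classical in
lemma condPr_eq {n : ℕ} (φ : ℕ → ℕ → ℝ) (n1 : ℕ) (d j : ℕ) (hd : j + d = n) (m : ℕ)
    (hpr : 0 < pr φ {s : Fin n → Bool | count1 s j = m}) :
    condPr φ {s : Fin n → Bool | count1 s n = n1} {s : Fin n → Bool | count1 s j = m}
      = G φ (fun k => if k = n1 then 1 else 0) d j m := by
  unfold condPr
  rw [pr_inter_eq φ n1 d j hd m, mul_comm, mul_div_assoc, div_self hpr.ne', mul_one]

open Classical in
lemma prefProd_le_pr {n : ℕ} {φ : ℕ → ℕ → ℝ} (hφ : ∀ j m, 0 ≤ φ j m ∧ φ j m ≤ 1)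
    (d j : ℕ) (hd : j + d = n) (t : Fin n → Bool) :
    prefProd φ t j ≤ pr φ {s : Fin n → Bool | count1 s j = count1 t j} := by
  have hms := main_sum φ (fun _ => (1:ℝ)) d j hd t
  rw [G_one, mul_one] at hms
  calc prefProd φ t j
      = ∑ s : Fin n → Bool, if ∀ i : Fin n, (i : ℕ) < j → s i = t i
          then (1:ℝ) * seqProb φ s else 0 := hms.symm
    _ ≤ ∑ s : Fin n → Bool,
          if s ∈ {s : Fin n → Bool | count1 s j = count1 t j} then seqProb φ s else 0 := by
        apply Finset.sum_le_sum
        intro s _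
        simp only [Set.mem_setOf_eq, one_mul]
        by_cases hag : ∀ i : Fin n, (i : ℕ) < j → s i = t i
        · rw [if_pos hag, if_pos (count1_congr hag)]
        · rw [if_neg hag]
          split
          · exact seqProb_nonneg hφ s
          · exact le_refl _
    _ = pr φ {s : Fin n → Bool | count1 s j = count1 t j} := by
        unfold pr
        apply Finset.sum_congr rfl
        intro s _
        by_cases h1 : count1 s j = count1 t j <;> simp [Set.mem_setOf_eq, h1]

open Classical in
lemma pr_A_eq {n : ℕ} (φ : ℕ → ℕ → ℝ) (n1 : ℕ) :
    pr φ {s : Fin n → Bool | count1 s n = n1}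
      = G φ (fun k => if k = n1 then 1 else 0) n 0 0 := by
  have hms := main_sum φ (fun k => if k = n1 then (1:ℝ) else 0) n 0 (by omega)
    (fun _ : Fin n => false)
  rw [count1_zero] at hms
  have h1 : prefProd φ (fun _ : Fin n => false) 0 = 1 := Finset.prod_range_zero _
  rw [h1, one_mul] at hms
  rw [← hms]
  unfold pr
  apply Finset.sum_congr rfl
  intro s _
  have hv : (∀ i : Fin n, (i : ℕ) < 0 → s i = (fun _ : Fin n => false) i) := by
    intro i hi; exact absurd hi (Nat.not_lt_zero _)
  rw [if_pos hv]
  by_cases h : count1 s n = n1 <;> simp [Set.mem_setOf_eq, h]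

lemma first_event_eq {n : ℕ} (hn : 1 ≤ n) :
    {s : Fin n → Bool | s ⟨0, hn⟩ = true} = {s : Fin n → Bool | count1 s 1 = 1} := by
  ext s
  simp only [Set.mem_setOf_eq]
  have h0 : (0:ℕ) < n := hn
  have hc1 : count1 s 1 = count1 s 0 + (if s ⟨0, h0⟩ = true then 1 else 0) := count1_succ s h0
  rw [count1_zero] at hc1
  constructor
  · intro hs; rw [hc1, if_pos hs]
  · intro hc
    by_contra hs
    rw [hc1, if_neg hs] at hc
    omega

lemma G_succ {φ : ℕ → ℕ → ℝ} {ψ : ℕ → ℝ} {n j : ℕ} (hj : j < n) (m : ℕ) :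
    G φ ψ (n - j) j m
      = φ j m * G φ ψ (n - (j+1)) (j+1) (m+1) + (1 - φ j m) * G φ ψ (n - (j+1)) (j+1) m := by
  obtain ⟨d, hd⟩ : ∃ d, n - j = d + 1 := ⟨n - (j+1), by omega⟩
  rw [hd, show n - (j+1) = d from by omega]
  rfl

lemma bfac_lt {n : ℕ} (φ : ℕ → ℕ → ℝ) (t : Fin n → Bool) {j : ℕ} (hj : j < n) :
    bfac φ t j = if t ⟨j, hj⟩ = true then φ j (count1 t j) else 1 - φ j (count1 t j) :=
  dif_pos hj

noncomputable def aF {n : ℕ} (pstep : (Fin n → Bool) → ℕ → ℝ) (t : Fin n → Bool) (j : ℕ) : ℝ :=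
  if hj : j < n then (if t ⟨j, hj⟩ = true then pstep t j else 1 - pstep t j) else 1

lemma aF_lt {n : ℕ} (pstep : (Fin n → Bool) → ℕ → ℝ) (t : Fin n → Bool) {j : ℕ} (hj : j < n) :
    aF pstep t j = if t ⟨j, hj⟩ = true then pstep t j else 1 - pstep t j :=
  dif_pos hj

lemma h_eq_range {n : ℕ} (pstep : (Fin n → Bool) → ℕ → ℝ) (t : Fin n → Bool) :
    (∏ i : Fin n, if t i = true then pstep t (i : ℕ) else 1 - pstep t (i : ℕ))
      = ∏ j ∈ Finset.range n, aF pstep t j := by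
  rw [← Fin.prod_univ_eq_prod_range (fun j => aF pstep t j) n]
  apply Finset.prod_congr rfl
  intro i _
  rw [aF, dif_pos i.isLt]

open Classical in
lemma pr_here_pos {n : ℕ} {φ : ℕ → ℕ → ℝ} (hφ : ∀ j m, 0 ≤ φ j m ∧ φ j m ≤ 1)
    {t : Fin n → Bool} {j : ℕ} (hj : j ≤ n) (hP : 0 < prefProd φ t j) :
    0 < pr φ {s : Fin n → Bool | count1 s j = count1 t j} :=
  lt_of_lt_of_le hP (prefProd_le_pr hφ (n - j) j (by omega) t)

open Classical in
lemma pr_up_pos {n : ℕ} {φ : ℕ → ℕ → ℝ} (hφ : ∀ j m, 0 ≤ φ j m ∧ φ j m ≤ 1)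
    {t : Fin n → Bool} {j : ℕ} (hj : j < n) (hP : 0 < prefProd φ t j)
    (hphi : 0 < φ j (count1 t j)) :
    0 < pr φ {s : Fin n → Bool | count1 s (j+1) = count1 t j + 1} := by
  set t'' := Function.update t ⟨j, hj⟩ true with ht''
  have hagree : ∀ i : Fin n, (i : ℕ) < j → t'' i = t i := by
    intro i hi
    apply Function.update_of_ne
    intro he; rw [he] at hi; exact absurd hi (lt_irrefl j)
  have hsame : t'' ⟨j, hj⟩ = true := Function.update_self _ _ _
  have h1 : count1 t'' (j+1) = count1 t j + 1 := by
    rw [count1_succ t'' hj, count1_congr hagree, hsame, if_pos rfl]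
  have h2 : prefProd φ t'' (j+1) = prefProd φ t j * φ j (count1 t j) := by
    rw [prefProd_succ, prefProd_congr φ hagree, bfac_lt φ t'' hj, hsame, if_pos rfl,
      count1_congr hagree]
  have hle := prefProd_le_pr hφ (n - (j+1)) (j+1) (by omega) t''
  rw [h1, h2] at hle
  exact lt_of_lt_of_le (mul_pos hP hphi) hle

open Classical in
lemma den_eq {n : ℕ} {φ : ℕ → ℕ → ℝ} (hφ : ∀ j m, 0 ≤ φ j m ∧ φ j m ≤ 1) (n1 : ℕ)
    {t : Fin n → Bool} {j : ℕ} (hj : j < n) (hP : 0 < prefProd φ t j) :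
    (if j = 0 then pr φ {s : Fin n → Bool | count1 s n = n1}
      else condPr φ {s : Fin n → Bool | count1 s n = n1}
        {s : Fin n → Bool | count1 s j = count1 t j})
      = G φ (fun k => if k = n1 then 1 else 0) (n - j) j (count1 t j) := by
  rcases Nat.eq_zero_or_pos j with rfl | hj1
  · rw [if_pos rfl, count1_zero, Nat.sub_zero]
    exact pr_A_eq φ n1
  · rw [if_neg (by omega)]
    exact condPr_eq φ n1 (n - j) j (by omega) (count1 t j) (pr_here_pos hφ (by omega) hP)

open Classical in
lemma num_eq {n : ℕ} {φ : ℕ → ℕ → ℝ} (hφ : ∀ j m, 0 ≤ φ j m ∧ φ j m ≤ 1) (n1 : ℕ)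
    {t : Fin n → Bool} {j : ℕ} (hj : j < n) (hP : 0 < prefProd φ t j)
    (hphi : 0 < φ j (count1 t j)) :
    condPr φ {s : Fin n → Bool | count1 s n = n1}
        {s : Fin n → Bool | count1 s (j+1) = count1 t j + 1}
      = G φ (fun k => if k = n1 then 1 else 0) (n - (j+1)) (j+1) (count1 t j + 1) :=
  condPr_eq φ n1 (n - (j+1)) (j+1) (by omega) (count1 t j + 1) (pr_up_pos hφ hj hP hphi)

open Classical in
lemma key_step {n : ℕ} {φ : ℕ → ℕ → ℝ} (hφ : ∀ j m, 0 ≤ φ j m ∧ φ j m ≤ 1) (n1 : ℕ)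
    (pstep : (Fin n → Bool) → ℕ → ℝ) (t : Fin n → Bool) {j : ℕ} (hj : j < n)
    (hps : pstep t j = φ j (count1 t j)
        * condPr φ {s : Fin n → Bool | count1 s n = n1}
            {s : Fin n → Bool | count1 s (j+1) = count1 t j + 1}
        / (if j = 0 then pr φ {s : Fin n → Bool | count1 s n = n1}
            else condPr φ {s : Fin n → Bool | count1 s n = n1}
              {s : Fin n → Bool | count1 s j = count1 t j}))
    (hP : 0 < prefProd φ t j)
    (hg : 0 < G φ (fun k => if k = n1 then 1 else 0) (n - j) j (count1 t j)) :
    aF pstep t j * G φ (fun k => if k = n1 then 1 else 0) (n - j) j (count1 t j)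
      = bfac φ t j
        * G φ (fun k => if k = n1 then 1 else 0) (n - (j+1)) (j+1) (count1 t (j+1)) := by
  rw [den_eq hφ n1 hj hP] at hps
  rcases (hφ j (count1 t j)).1.eq_or_lt with hphi | hphi
  · -- φ j m = 0
    have hphi0 : φ j (count1 t j) = 0 := hphi.symm
    rw [hphi0, zero_mul, zero_div] at hps
    by_cases hb : t ⟨j, hj⟩ = true
    · rw [aF_lt pstep t hj, if_pos hb, hps, bfac_lt φ t hj, if_pos hb, hphi0,
        zero_mul, zero_mul]
    · rw [aF_lt pstep t hj, if_neg hb, hps, bfac_lt φ t hj, if_neg hb,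
        count1_succ t hj, if_neg hb, add_zero, G_succ hj (count1 t j), hphi0]
      ring
  · -- φ j m > 0
    rw [num_eq hφ n1 hj hP hphi] at hps
    have hrec := G_succ (φ := φ) (ψ := fun k => if k = n1 then (1:ℝ) else 0) hj (count1 t j)
    by_cases hb : t ⟨j, hj⟩ = true
    · rw [aF_lt pstep t hj, if_pos hb, hps, bfac_lt φ t hj, if_pos hb,
        count1_succ t hj, if_pos hb, div_mul_cancel₀ _ hg.ne']
    · rw [aF_lt pstep t hj, if_neg hb, hps, bfac_lt φ t hj, if_neg hb,
        count1_succ t hj, if_neg hb, add_zero]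
      have hexp : (1 - φ j (count1 t j)
            * G φ (fun k => if k = n1 then 1 else 0) (n - (j+1)) (j+1) (count1 t j + 1)
            / G φ (fun k => if k = n1 then 1 else 0) (n - j) j (count1 t j))
          * G φ (fun k => if k = n1 then 1 else 0) (n - j) j (count1 t j)
          = G φ (fun k => if k = n1 then 1 else 0) (n - j) j (count1 t j)
            - φ j (count1 t j)
              * G φ (fun k => if k = n1 then 1 else 0) (n - (j+1)) (j+1) (count1 t j + 1) := by
        field_simp
      rw [hexp, hrec]
      ring

open Classical in
lemma key_zero {n : ℕ} {φ : ℕ → ℕ → ℝ} (hφ : ∀ j m, 0 ≤ φ j m ∧ φ j m ≤ 1) (n1 : ℕ)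
    (pstep : (Fin n → Bool) → ℕ → ℝ) (t : Fin n → Bool) {j : ℕ} (hj : j < n)
    (hps : pstep t j = φ j (count1 t j)
        * condPr φ {s : Fin n → Bool | count1 s n = n1}
            {s : Fin n → Bool | count1 s (j+1) = count1 t j + 1}
        / (if j = 0 then pr φ {s : Fin n → Bool | count1 s n = n1}
            else condPr φ {s : Fin n → Bool | count1 s n = n1}
              {s : Fin n → Bool | count1 s j = count1 t j}))
    (hP : 0 < prefProd φ t j)
    (hg : 0 < G φ (fun k => if k = n1 then 1 else 0) (n - j) j (count1 t j))
    (hbad : prefProd φ t (j+1) = 0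
      ∨ G φ (fun k => if k = n1 then 1 else 0) (n - (j+1)) (j+1) (count1 t (j+1)) = 0) :
    aF pstep t j = 0 := by
  rw [den_eq hφ n1 hj hP] at hps
  by_cases hb : t ⟨j, hj⟩ = true
  · rw [aF_lt pstep t hj, if_pos hb]
    rcases (hφ j (count1 t j)).1.eq_or_lt with hphi | hphi
    · rw [hps, ← hphi, zero_mul, zero_div]
    · rw [num_eq hφ n1 hj hP hphi] at hps
      have hg1 : G φ (fun k => if k = n1 then 1 else 0) (n - (j+1)) (j+1) (count1 t j + 1)
          = 0 := by
        rcases hbad with hb1 | hb2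
        · exfalso
          rw [prefProd_succ, bfac_lt φ t hj, if_pos hb] at hb1
          exact (mul_pos hP hphi).ne' hb1
        · rwa [count1_succ t hj, if_pos hb] at hb2
      rw [hps, hg1, mul_zero, zero_div]
  · rw [aF_lt pstep t hj, if_neg hb]
    have hmj1 : count1 t (j+1) = count1 t j := by
      rw [count1_succ t hj, if_neg hb, add_zero]
    have hrec := G_succ (φ := φ) (ψ := fun k => if k = n1 then (1:ℝ) else 0) hj (count1 t j)
    by_cases hb1 : prefProd φ t (j+1) = 0
    · -- forced φ = 1
      have hphi1 : φ j (count1 t j) = 1 := by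
        rw [prefProd_succ, bfac_lt φ t hj, if_neg hb] at hb1
        rcases mul_eq_zero.mp hb1 with h | h
        · exact absurd h hP.ne'
        · linarith
      have hphi : 0 < φ j (count1 t j) := by rw [hphi1]; norm_num
      rw [num_eq hφ n1 hj hP hphi] at hps
      rw [hphi1] at hrec
      have hg1 : G φ (fun k => if k = n1 then 1 else 0) (n - (j+1)) (j+1) (count1 t j + 1)
          = G φ (fun k => if k = n1 then 1 else 0) (n - j) j (count1 t j) := by
        rw [hrec]; ring
      rw [hps, hphi1, hg1, one_mul, div_self hg.ne', sub_self]
    · have hg2 : G φ (fun k => if k = n1 then 1 else 0) (n - (j+1)) (j+1) (count1 t j) = 0 := by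
        rcases hbad with h | h
        · exact absurd h hb1
        · rwa [hmj1] at h
      rw [hg2, mul_zero, add_zero] at hrec
      have hphi : 0 < φ j (count1 t j) := by
        rcases (hφ j (count1 t j)).1.eq_or_lt with h | h
        · exfalso
          rw [← h, zero_mul] at hrec
          exact hg.ne' hrec
        · exact h
      rw [num_eq hφ n1 hj hP hphi] at hps
      rw [hps, ← hrec, div_self hg.ne', sub_self]


/-- the sampling rule of Theorem 2.1 produces exactly the
conditional pmf of `T` given `N_1(n)=n_1`: with
`p_{j+1} = φ_{j+1}(m_j)·P(N_1(n)=n_1|N_1(j+1)=m_j+1)/P(N_1(n)=n_1|N_1(j)=m_j)`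
(and `p_1 = φ_1(0)·P(N_1(n)=n_1|T_1=1)/P(N_1(n)=n_1)`),
`h(t) = Π_j p_{j+1}^{t_{j+1}}(1−p_{j+1})^{1−t_{j+1}}` satisfies
`h(t) = P(T=t)/P(N_1(n)=n_1)` for each `t` with `Σ t_i = n_1`, and sums to 1
over the conditional reference set. -/
theorem cond_pmf_of_sampling_rule (n : ℕ) (hn : 1 ≤ n) (φ : ℕ → ℕ → ℝ)
    (hφ : ∀ j m, 0 ≤ φ j m ∧ φ j m ≤ 1) (n1 : ℕ)
    (hpos : 0 < pr φ {t : Fin n → Bool | count1 t n = n1})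
    (pstep : (Fin n → Bool) → ℕ → ℝ)
    (hpstep0 : ∀ t : Fin n → Bool, pstep t 0
        = φ 0 0
            * condPr φ {s : Fin n → Bool | count1 s n = n1}
                {s : Fin n → Bool | s ⟨0, by omega⟩ = true}
            / pr φ {s : Fin n → Bool | count1 s n = n1})
    (hpstep : ∀ t : Fin n → Bool, ∀ j, 1 ≤ j → j ≤ n - 1 → pstep t j
        = φ j (count1 t j)
            * condPr φ {s : Fin n → Bool | count1 s n = n1}
                {s : Fin n → Bool | count1 s (j + 1) = count1 t j + 1}
            / condPr φ {s : Fin n → Bool | count1 s n = n1}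
                {s : Fin n → Bool | count1 s j = count1 t j})
    (h : (Fin n → Bool) → ℝ)
    (hh : ∀ t : Fin n → Bool, h t
        = ∏ i : Fin n, if t i = true then pstep t (i : ℕ) else 1 - pstep t (i : ℕ)) :
    (∀ t : Fin n → Bool, count1 t n = n1 →
        h t = seqProb φ t / pr φ {s : Fin n → Bool | count1 s n = n1})
    ∧ (∑ t : Fin n → Bool, if count1 t n = n1 then h t else 0) = 1 := by
  classical
  have hposA : 0 < pr φ {s : Fin n → Bool | count1 s n = n1} := hpos
  have claim : ∀ t : Fin n → Bool, count1 t n = n1 →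
      h t = seqProb φ t / pr φ {s : Fin n → Bool | count1 s n = n1} := by
    intro t hA
    -- uniform form of the sampling rule
    have hps' : ∀ j, j < n → pstep t j = φ j (count1 t j)
        * condPr φ {s : Fin n → Bool | count1 s n = n1}
            {s : Fin n → Bool | count1 s (j+1) = count1 t j + 1}
        / (if j = 0 then pr φ {s : Fin n → Bool | count1 s n = n1}
            else condPr φ {s : Fin n → Bool | count1 s n = n1}
              {s : Fin n → Bool | count1 s j = count1 t j}) := by
      intro j hj
      rcases Nat.eq_zero_or_pos j with rfl | hj1
      · rw [hpstep0 t, if_pos rfl, first_event_eq hn, count1_zero]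
      · rw [hpstep t j hj1 (by omega), if_neg (by omega)]
    have hhr : h t = ∏ j ∈ Finset.range n, aF pstep t j := by
      rw [hh t, h_eq_range]
    by_cases hex : ∃ j, j ≤ n ∧ (prefProd φ t j = 0
        ∨ G φ (fun k => if k = n1 then 1 else 0) (n - j) j (count1 t j) = 0)
    · -- degenerate case: both sides vanish
      set jb := Nat.find hex with hjbdef
      have hjb := Nat.find_spec hex
      rw [← hjbdef] at hjb
      have hjb1 : 1 ≤ jb := by
        rcases Nat.eq_zero_or_pos jb with h0 | h1
        · exfalso
          rw [h0] at hjb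
          rcases hjb.2 with hc | hc
          · rw [show prefProd φ t 0 = 1 from Finset.prod_range_zero _] at hc
            norm_num at hc
          · rw [count1_zero, Nat.sub_zero, ← pr_A_eq φ n1] at hc
            exact hposA.ne' hc
        · exact h1
      set k := jb - 1 with hkdef
      have hkjb : k + 1 = jb := by omega
      have hkn : k < n := by omega
      have hnotk : ¬ (k ≤ n ∧ (prefProd φ t k = 0
          ∨ G φ (fun k' => if k' = n1 then 1 else 0) (n - k) k (count1 t k) = 0)) :=
        Nat.find_min hex (by omega)
      push_neg at hnotk
      obtain ⟨hP0, hg0⟩ := hnotk (by omega)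
      have hPk : 0 < prefProd φ t k := (prefProd_nonneg hφ t k).lt_of_ne (Ne.symm hP0)
      have hgk : 0 < G φ (fun k' => if k' = n1 then 1 else 0) (n - k) k (count1 t k) :=
        (G_nonneg hφ (by intro m; split <;> norm_num) _ _ _).lt_of_ne (Ne.symm hg0)
      have hbad : prefProd φ t (k+1) = 0
          ∨ G φ (fun k' => if k' = n1 then 1 else 0) (n - (k+1)) (k+1) (count1 t (k+1)) = 0 := by
        rw [hkjb]
        exact hjb.2
      have haf0 : aF pstep t k = 0 :=
        key_zero hφ n1 pstep t hkn (hps' k hkn) hPk hgk hbad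
      have hht0 : h t = 0 := by
        rw [hhr]
        exact Finset.prod_eq_zero (Finset.mem_range.mpr hkn) haf0
      have hsp0 : seqProb φ t = 0 := by
        have hsplit : seqProb φ t
            = prefProd φ t (k+1) * ∏ i ∈ Finset.Ico (k+1) n, bfac φ t i := by
          rw [seqProb_eq_prefProd]
          unfold prefProd
          rw [Finset.range_eq_Ico, Finset.range_eq_Ico]
          exact (Finset.prod_Ico_consecutive (fun i => bfac φ t i) (Nat.zero_le (k+1))
            (show k+1 ≤ n from hkn)).symm
        rcases hbad with hb1 | hb2
        · rw [hsplit, hb1, zero_mul]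
        · have htail := tail_le hφ n1 hA (n - (k+1)) (k+1) (by omega)
          rw [hb2] at htail
          have htail0 : (∏ i ∈ Finset.Ico (k+1) n, bfac φ t i) = 0 :=
            le_antisymm htail (Finset.prod_nonneg fun i _ => bfac_nonneg hφ t i)
          rw [hsplit, htail0, mul_zero]
      rw [hht0, hsp0, zero_div]
    · -- non-degenerate case: telescoping
      push_neg at hex
      have hgood : ∀ j, j ≤ n → 0 < prefProd φ t j
          ∧ 0 < G φ (fun k => if k = n1 then 1 else 0) (n - j) j (count1 t j) := by
        intro j hjn
        obtain ⟨h1, h2⟩ := hex j hjn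
        exact ⟨(prefProd_nonneg hφ t j).lt_of_ne (Ne.symm h1),
          (G_nonneg hφ (by intro m; split <;> norm_num) _ _ _).lt_of_ne (Ne.symm h2)⟩
      have tele : ∀ j, j ≤ n →
          (∏ k ∈ Finset.range j, aF pstep t k) * pr φ {s : Fin n → Bool | count1 s n = n1}
          = prefProd φ t j * G φ (fun k => if k = n1 then 1 else 0) (n - j) j (count1 t j) := by
        intro j
        induction j with
        | zero =>
          intro _
          rw [Finset.prod_range_zero, count1_zero, Nat.sub_zero,
            show prefProd φ t 0 = 1 from Finset.prod_range_zero _, one_mul, one_mul,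
            pr_A_eq φ n1]
        | succ j ih =>
          intro hjn
          have hjn' : j < n := by omega
          have hkey := key_step hφ n1 pstep t hjn' (hps' j hjn')
            (hgood j (by omega)).1 (hgood j (by omega)).2
          have hgj := (hgood j (by omega)).2
          rw [Finset.prod_range_succ, prefProd_succ]
          calc (∏ k ∈ Finset.range j, aF pstep t k) * aF pstep t j
                * pr φ {s : Fin n → Bool | count1 s n = n1}
              = ((∏ k ∈ Finset.range j, aF pstep t k)
                  * pr φ {s : Fin n → Bool | count1 s n = n1}) * aF pstep t j := by ring
            _ = prefProd φ t j
                  * G φ (fun k => if k = n1 then 1 else 0) (n - j) j (count1 t j)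
                  * aF pstep t j := by rw [ih (by omega)]
            _ = prefProd φ t j * (aF pstep t j
                  * G φ (fun k => if k = n1 then 1 else 0) (n - j) j (count1 t j)) := by ring
            _ = prefProd φ t j * (bfac φ t j
                  * G φ (fun k => if k = n1 then 1 else 0) (n - (j+1)) (j+1)
                      (count1 t (j+1))) := by rw [hkey]
            _ = prefProd φ t j * bfac φ t j
                  * G φ (fun k => if k = n1 then 1 else 0) (n - (j+1)) (j+1)
                      (count1 t (j+1)) := by ring
      have htop := tele n (le_refl n)
      rw [Nat.sub_self] at htop
      have hGn : G φ (fun k => if k = n1 then 1 else 0) 0 n (count1 t n) = 1 := by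
        show (if count1 t n = n1 then (1:ℝ) else 0) = 1
        rw [if_pos hA]
      rw [hGn, mul_one, ← seqProb_eq_prefProd, ← hhr] at htop
      rw [eq_div_iff hposA.ne']
      exact htop
  refine ⟨claim, ?_⟩
  have hsum : (∑ t : Fin n → Bool, if count1 t n = n1 then h t else 0)
      = (∑ t : Fin n → Bool, if count1 t n = n1 then seqProb φ t else 0)
        / pr φ {s : Fin n → Bool | count1 s n = n1} := by
    rw [Finset.sum_div]
    apply Finset.sum_congr rfl
    intro t _
    by_cases hA : count1 t n = n1
    · rw [if_pos hA, if_pos hA, claim t hA]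
    · rw [if_neg hA, if_neg hA, zero_div]
  rw [hsum]
  have hprA : (∑ t : Fin n → Bool, if count1 t n = n1 then seqProb φ t else 0)
      = pr φ {s : Fin n → Bool | count1 s n = n1} := by
    unfold pr
    apply Finset.sum_congr rfl
    intro t _
    by_cases hA : count1 t n = n1 <;> simp [Set.mem_setOf_eq, hA]
  rw [hprA, div_self hposA.ne']
end

section
/- Under a restricted randomization procedure, for fixed monitoring times 0 = r_0 < r_1 < ... < r_l and counts n_{10}=0, n_{11}, ..., n_{1l}, and for r_{k−1} ≤ j < r_k, the conditional probability P(T_{j+1}=1 | N_1(j)=m_j, ∩_{i=k}^{l} {N_1(r_i)=n_{1i}}) equals φ_{j+1}(m_j) · P(N_1(r_k)=n_{1k} | N_1(j+1)=m_j+1) / P(N_1(r_k)=n_{1k} | N_1(j)=m_j); in particular it depends only on the next monitoring constraint N_1(r_k)=n_{1k}. -/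
open Finset

namespace Thm31

attribute [local instance] Classical.propDecidable

variable {n : ℕ}

noncomputable def wgt (φ : ℕ → ℕ → ℝ) (t : Fin n → Bool) (i : Fin n) : ℝ :=
  if t i = true then φ (i : ℕ) (count1 t (i : ℕ)) else 1 - φ (i : ℕ) (count1 t (i : ℕ))

noncomputable def upTo (φ : ℕ → ℕ → ℝ) (t : Fin n → Bool) (e : ℕ) : ℝ :=
  ∏ i ∈ Finset.univ.filter (fun i : Fin n => (i : ℕ) < e), wgt φ t i

lemma seqProb_eq_upTo (φ : ℕ → ℕ → ℝ) (t : Fin n → Bool) : seqProb φ t = upTo φ t n := by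
  unfold seqProb upTo wgt
  rw [Finset.filter_true_of_mem (fun i _ => i.isLt)]

lemma count1_congr {t t' : Fin n → Bool} {e : ℕ}
    (h : ∀ i : Fin n, (i : ℕ) < e → t i = t' i) {j : ℕ} (hj : j ≤ e) :
    count1 t j = count1 t' j := by
  unfold count1
  congr 1
  ext i
  simp only [mem_filter, mem_univ, true_and]
  constructor
  · rintro ⟨hi, ht⟩; exact ⟨hi, by rw [← h i (lt_of_lt_of_le hi hj)]; exact ht⟩
  · rintro ⟨hi, ht⟩; exact ⟨hi, by rw [h i (lt_of_lt_of_le hi hj)]; exact ht⟩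

lemma count1_succ (t : Fin n → Bool) (j : ℕ) (hj : j < n) :
    count1 t (j + 1) = count1 t j + (if t ⟨j, hj⟩ = true then 1 else 0) := by
  unfold count1
  by_cases h : t ⟨j, hj⟩ = true
  · rw [if_pos h]
    have hset : (Finset.univ.filter (fun i : Fin n => (i : ℕ) < j + 1 ∧ t i = true))
        = insert ⟨j, hj⟩ (Finset.univ.filter (fun i : Fin n => (i : ℕ) < j ∧ t i = true)) := by
      ext i
      simp only [mem_filter, mem_insert, mem_univ, true_and]
      constructor
      · rintro ⟨hi, ht⟩
        rcases Nat.lt_succ_iff_lt_or_eq.mp hi with h' | h'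
        · exact Or.inr ⟨h', ht⟩
        · exact Or.inl (Fin.ext h')
      · rintro (rfl | ⟨hi, ht⟩)
        · exact ⟨Nat.lt_succ_self _, h⟩
        · exact ⟨Nat.lt_succ_of_lt hi, ht⟩
    rw [hset, Finset.card_insert_of_notMem (by simp)]
  · rw [if_neg h]
    have hset : (Finset.univ.filter (fun i : Fin n => (i : ℕ) < j + 1 ∧ t i = true))
        = Finset.univ.filter (fun i : Fin n => (i : ℕ) < j ∧ t i = true) := by
      ext i
      simp only [mem_filter, mem_univ, true_and]
      constructor
      · rintro ⟨hi, ht⟩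
        rcases Nat.lt_succ_iff_lt_or_eq.mp hi with h' | h'
        · exact ⟨h', ht⟩
        · exact absurd (by rw [← show i = ⟨j, hj⟩ from Fin.ext h']; exact ht : t ⟨j, hj⟩ = true) h
      · rintro ⟨hi, ht⟩
        exact ⟨Nat.lt_succ_of_lt hi, ht⟩
    rw [hset]
    omega

lemma upTo_succ (φ : ℕ → ℕ → ℝ) (t : Fin n → Bool) (e : ℕ) (he : e < n) :
    upTo φ t (e + 1) = upTo φ t e * wgt φ t ⟨e, he⟩ := by
  unfold upTo
  have hset : (Finset.univ.filter (fun i : Fin n => (i : ℕ) < e + 1))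
      = insert ⟨e, he⟩ (Finset.univ.filter (fun i : Fin n => (i : ℕ) < e)) := by
    ext i
    simp only [mem_filter, mem_insert, mem_univ, true_and]
    constructor
    · intro hi
      rcases Nat.lt_succ_iff_lt_or_eq.mp hi with h' | h'
      · exact Or.inr h'
      · exact Or.inl (Fin.ext h')
    · rintro (rfl | hi)
      · exact Nat.lt_succ_self _
      · exact Nat.lt_succ_of_lt hi
  rw [hset, Finset.prod_insert (by simp), mul_comm]

lemma upTo_congr (φ : ℕ → ℕ → ℝ) {t t' : Fin n → Bool} {e : ℕ}
    (h : ∀ i : Fin n, (i : ℕ) < e → t i = t' i) :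
    upTo φ t e = upTo φ t' e := by
  unfold upTo
  apply Finset.prod_congr rfl
  intro i hi
  simp only [mem_filter, mem_univ, true_and] at hi
  unfold wgt
  rw [h i hi, count1_congr h (le_of_lt hi)]


lemma flip_invol (b : Fin n) :
    Function.Involutive (fun t : Fin n → Bool => Function.update t b (!(t b))) := by
  intro t
  funext i
  by_cases hi : i = b
  · subst hi; simp
  · simp [Function.update_of_ne hi]

lemma sum_flip (b : Fin n) (f : (Fin n → Bool) → ℝ) :
    ∑ t, f (Function.update t b (!(t b))) = ∑ t, f t :=
  Function.Bijective.sum_comp ((flip_invol b).bijective) f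

lemma sum_upTo_halve (φ : ℕ → ℕ → ℝ) (e : ℕ) (he : e < n) (P : (Fin n → Bool) → Prop)
    (hP : ∀ t t', (∀ i : Fin n, (i : ℕ) < e → t i = t' i) → P t → P t') :
    2 * (∑ t, if P t then upTo φ t (e + 1) else 0)
      = ∑ t, if P t then upTo φ t e else 0 := by
  classical
  set b : Fin n := ⟨e, he⟩ with hb
  have key : ∀ t : Fin n → Bool,
      (if P t then upTo φ t (e + 1) else 0)
        + (if P (Function.update t b (!(t b))) then
            upTo φ (Function.update t b (!(t b))) (e + 1) else 0)
      = if P t then upTo φ t e else 0 := by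
    intro t
    set ft := Function.update t b (!(t b)) with hft
    have hagree : ∀ i : Fin n, (i : ℕ) < e → ft i = t i := by
      intro i hi
      have hne : i ≠ b := by
        intro h
        rw [h, hb] at hi
        exact absurd hi (lt_irrefl _)
      simp [hft, Function.update_of_ne hne]
    have hPiff : P ft ↔ P t := ⟨hP ft t hagree, hP t ft (fun i hi => (hagree i hi).symm)⟩
    by_cases hp : P t
    · rw [if_pos hp, if_pos (hPiff.mpr hp), if_pos hp]
      rw [upTo_succ φ t e he, upTo_succ φ ft e he]
      rw [upTo_congr φ hagree]
      have hone : wgt φ t b + wgt φ ft b = 1 := by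
        unfold wgt
        have hfb : ft b = !(t b) := by simp [hft]
        have hcb : count1 ft (b : ℕ) = count1 t (b : ℕ) := count1_congr hagree le_rfl
        rw [hfb, hcb]
        cases h : t b <;> simp
      rw [← mul_add, hone, mul_one]
    · rw [if_neg hp, if_neg (fun h => hp (hPiff.mp h)), if_neg hp]; ring
  have hflip := sum_flip b (fun t => if P t then upTo φ t (e + 1) else 0)
  calc 2 * (∑ t, if P t then upTo φ t (e + 1) else 0)
      = (∑ t, if P t then upTo φ t (e + 1) else 0)
        + ∑ t, (fun t => if P t then upTo φ t (e + 1) else 0) (Function.update t b (!(t b))) := by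
        rw [hflip]; ring
    _ = ∑ t, ((if P t then upTo φ t (e + 1) else 0)
        + (if P (Function.update t b (!(t b))) then
            upTo φ (Function.update t b (!(t b))) (e + 1) else 0)) := by
        rw [← Finset.sum_add_distrib]
    _ = ∑ t, if P t then upTo φ t e else 0 := by
        exact Finset.sum_congr rfl (fun t _ => key t)

lemma sum_upTo_split (φ : ℕ → ℕ → ℝ) (e : ℕ) (he : e < n) (P : (Fin n → Bool) → Prop)
    (hP : ∀ t t', (∀ i : Fin n, (i : ℕ) < e → t i = t' i) → P t → P t') :
    2 * (∑ t, if P t ∧ t ⟨e, he⟩ = true then upTo φ t e else 0)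
      = ∑ t, if P t then upTo φ t e else 0 := by
  classical
  set b : Fin n := ⟨e, he⟩ with hb
  have key : ∀ t : Fin n → Bool,
      (if P t ∧ t b = true then upTo φ t e else 0)
        + (if P (Function.update t b (!(t b))) ∧ (Function.update t b (!(t b))) b = true then
            upTo φ (Function.update t b (!(t b))) e else 0)
      = if P t then upTo φ t e else 0 := by
    intro t
    set ft := Function.update t b (!(t b)) with hft
    have hagree : ∀ i : Fin n, (i : ℕ) < e → ft i = t i := by
      intro i hi
      have hne : i ≠ b := by
        intro h
        rw [h, hb] at hi
        exact absurd hi (lt_irrefl _)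
      simp [hft, Function.update_of_ne hne]
    have hPiff : P ft ↔ P t := ⟨hP ft t hagree, hP t ft (fun i hi => (hagree i hi).symm)⟩
    have hup : upTo φ ft e = upTo φ t e := upTo_congr φ hagree
    have hfb : ft b = !(t b) := by simp [hft]
    by_cases hp : P t
    · by_cases h : t b = true
      · rw [if_pos ⟨hp, h⟩, if_neg (by intro hc; rw [hfb, h] at hc; simp at hc), if_pos hp]
        ring
      · have h' : t b = false := Bool.not_eq_true _ ▸ (by simpa using h)
        rw [if_neg (fun hc => h hc.2),
            if_pos ⟨hPiff.mpr hp, by rw [hfb, h']; rfl⟩, if_pos hp, hup]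
        ring
    · rw [if_neg (fun hc => hp hc.1), if_neg (fun hc => hp (hPiff.mp hc.1)), if_neg hp]; ring
  have hflip := sum_flip b (fun t => if P t ∧ t b = true then upTo φ t e else 0)
  calc 2 * (∑ t, if P t ∧ t b = true then upTo φ t e else 0)
      = (∑ t, if P t ∧ t b = true then upTo φ t e else 0)
        + ∑ t, (fun t => if P t ∧ t b = true then upTo φ t e else 0)
            (Function.update t b (!(t b))) := by
        rw [hflip]; ring
    _ = ∑ t, ((if P t ∧ t b = true then upTo φ t e else 0)
        + (if P (Function.update t b (!(t b))) ∧ (Function.update t b (!(t b))) b = true then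
            upTo φ (Function.update t b (!(t b))) e else 0)) := by
        rw [← Finset.sum_add_distrib]
    _ = ∑ t, if P t then upTo φ t e else 0 := Finset.sum_congr rfl (fun t _ => key t)

noncomputable def prP (φ : ℕ → ℕ → ℝ) (P : (Fin n → Bool) → Prop) : ℝ :=
  ∑ t, if P t then seqProb φ t else 0

lemma pr_eq_prP (φ : ℕ → ℕ → ℝ) (P : (Fin n → Bool) → Prop) :
    pr φ {t | P t} = prP φ P := by
  unfold pr prP
  exact Finset.sum_congr rfl fun t _ => if_congr Iff.rfl rfl rfl

lemma pr_eq_upTo (φ : ℕ → ℕ → ℝ) : ∀ (d e : ℕ), e + d = n →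
    ∀ (P : (Fin n → Bool) → Prop),
    (∀ t t', (∀ i : Fin n, (i : ℕ) < e → t i = t' i) → P t → P t') →
    prP φ P * 2 ^ d = ∑ t, if P t then upTo φ t e else 0 := by
  intro d
  induction d with
  | zero =>
    intro e he P hP
    obtain rfl : e = n := by omega
    simp only [pow_zero, mul_one]
    unfold prP
    apply Finset.sum_congr rfl
    intro t _
    by_cases hp : P t
    · rw [if_pos hp, if_pos hp, seqProb_eq_upTo]
    · rw [if_neg hp, if_neg hp]
  | succ d ih =>
    intro e he P hP
    have he1 : (e + 1) + d = n := by omega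
    have hen : e < n := by omega
    have hP1 : ∀ t t', (∀ i : Fin n, (i : ℕ) < e + 1 → t i = t' i) → P t → P t' :=
      fun t t' h => hP t t' (fun i hi => h i (Nat.lt_succ_of_lt hi))
    calc prP φ P * 2 ^ (d + 1)
        = 2 * (prP φ P * 2 ^ d) := by ring
      _ = 2 * (∑ t, if P t then upTo φ t (e + 1) else 0) := by rw [ih (e + 1) he1 P hP1]
      _ = ∑ t, if P t then upTo φ t e else 0 := sum_upTo_halve φ e hen P hP

lemma prP_nonneg (φ : ℕ → ℕ → ℝ) (hφ : ∀ j m, 0 ≤ φ j m ∧ φ j m ≤ 1)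
    (P : (Fin n → Bool) → Prop) : 0 ≤ prP φ P := by
  unfold prP
  apply Finset.sum_nonneg
  intro t _
  by_cases h : P t
  · rw [if_pos h]
    unfold seqProb
    apply Finset.prod_nonneg
    intro i _
    by_cases hi : t i = true
    · rw [if_pos hi]; exact (hφ _ _).1
    · rw [if_neg hi]; linarith [(hφ (i : ℕ) (count1 t (i : ℕ))).2]
  · rw [if_neg h]

lemma prP_mono (φ : ℕ → ℕ → ℝ) (hφ : ∀ j m, 0 ≤ φ j m ∧ φ j m ≤ 1)
    {P P' : (Fin n → Bool) → Prop} (h : ∀ t, P t → P' t) : prP φ P ≤ prP φ P' := by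
  unfold prP
  apply Finset.sum_le_sum
  intro t _
  by_cases ht : P t
  · rw [if_pos ht, if_pos (h t ht)]
  · rw [if_neg ht]
    by_cases ht' : P' t
    · rw [if_pos ht']
      have := prP_nonneg (n := n) φ hφ
      unfold seqProb
      apply Finset.prod_nonneg
      intro i _
      by_cases hi : t i = true
      · rw [if_pos hi]; exact (hφ _ _).1
      · rw [if_neg hi]; linarith [(hφ (i : ℕ) (count1 t (i : ℕ))).2]
    · rw [if_neg ht']

lemma prP_congr (φ : ℕ → ℕ → ℝ) {P P' : (Fin n → Bool) → Prop}
    (h : ∀ t, P t ↔ P' t) : prP φ P = prP φ P' := by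
  unfold prP
  exact Finset.sum_congr rfl fun t _ => if_congr (h t) rfl rfl

lemma prP_split_bool (φ : ℕ → ℕ → ℝ) (b : Fin n) (P : (Fin n → Bool) → Prop) :
    prP φ P = prP φ (fun t => P t ∧ t b = true) + prP φ (fun t => P t ∧ t b = false) := by
  unfold prP
  rw [← Finset.sum_add_distrib]
  apply Finset.sum_congr rfl
  intro t _
  by_cases hp : P t
  · cases h : t b
    · rw [if_pos hp, if_neg (fun hc => by simp [h] at hc), if_pos ⟨hp, h⟩]; ring
    · rw [if_pos hp, if_pos ⟨hp, h⟩, if_neg (fun hc => by simp [h] at hc)]; ring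
  · rw [if_neg hp, if_neg (fun hc => hp hc.1), if_neg (fun hc => hp hc.1)]; ring

lemma prP_step_true (φ : ℕ → ℕ → ℝ) (b : ℕ) (hb : b < n) (c : ℕ)
    (P : (Fin n → Bool) → Prop)
    (hPdep : ∀ t t', (∀ i : Fin n, (i : ℕ) < b → t i = t' i) → P t → P t')
    (hPc : ∀ t, P t → count1 t b = c) :
    prP φ (fun t => P t ∧ t ⟨b, hb⟩ = true) = prP φ P * φ b c := by
  set d := n - (b + 1) with hd
  have hd1 : (b + 1) + d = n := by omega
  have hd0 : b + (d + 1) = n := by omega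
  have hdep1 : ∀ t t', (∀ i : Fin n, (i : ℕ) < b + 1 → t i = t' i) →
      (P t ∧ t ⟨b, hb⟩ = true) → (P t' ∧ t' ⟨b, hb⟩ = true) := by
    rintro t t' h ⟨hp, htb⟩
    refine ⟨hPdep t t' (fun i hi => h i (Nat.lt_succ_of_lt hi)) hp, ?_⟩
    rw [← h ⟨b, hb⟩ (Nat.lt_succ_self b)]
    exact htb
  have h1 := pr_eq_upTo φ d (b + 1) hd1 (fun t => P t ∧ t ⟨b, hb⟩ = true) hdep1
  beta_reduce at h1
  have h0 := pr_eq_upTo φ (d + 1) b hd0 P hPdep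
  have h2 : (∑ t, if P t ∧ t ⟨b, hb⟩ = true then upTo φ t (b + 1) else 0)
      = φ b c * ∑ t, if P t ∧ t ⟨b, hb⟩ = true then upTo φ t b else 0 := by
    rw [Finset.mul_sum]
    apply Finset.sum_congr rfl
    intro t _
    by_cases hp : P t ∧ t ⟨b, hb⟩ = true
    · rw [if_pos hp, if_pos hp, upTo_succ φ t b hb]
      unfold wgt
      rw [if_pos hp.2, hPc t hp.1]
      ring
    · rw [if_neg hp, if_neg hp, mul_zero]
  have h3 := sum_upTo_split φ b hb P hPdep
  have h2ne : (2 : ℝ) ^ (d + 1) ≠ 0 := by positivity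
  apply mul_right_cancel₀ h2ne
  calc prP φ (fun t => P t ∧ t ⟨b, hb⟩ = true) * 2 ^ (d + 1)
      = (prP φ (fun t => P t ∧ t ⟨b, hb⟩ = true) * 2 ^ d) * 2 := by ring
    _ = (∑ t, if P t ∧ t ⟨b, hb⟩ = true then upTo φ t (b + 1) else 0) * 2 := by
        rw [h1]
        apply congrArg (fun x => x * 2)
        apply Finset.sum_congr rfl
        intro t _
        by_cases h : P t ∧ t ⟨b, hb⟩ = true
        · rw [if_pos h, if_pos h]
        · rw [if_neg h, if_neg h]
    _ = φ b c * (2 * ∑ t, if P t ∧ t ⟨b, hb⟩ = true then upTo φ t b else 0) := by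
        rw [h2]; ring
    _ = φ b c * (∑ t, if P t then upTo φ t b else 0) := by rw [h3]
    _ = φ b c * (prP φ P * 2 ^ (d + 1)) := by rw [h0]
    _ = (prP φ P * φ b c) * 2 ^ (d + 1) := by ring

lemma prP_step_false (φ : ℕ → ℕ → ℝ) (b : ℕ) (hb : b < n) (c : ℕ)
    (P : (Fin n → Bool) → Prop)
    (hPdep : ∀ t t', (∀ i : Fin n, (i : ℕ) < b → t i = t' i) → P t → P t')
    (hPc : ∀ t, P t → count1 t b = c) :
    prP φ (fun t => P t ∧ t ⟨b, hb⟩ = false) = prP φ P * (1 - φ b c) := by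
  have hsplit := prP_split_bool φ ⟨b, hb⟩ P
  have htrue := prP_step_true φ b hb c P hPdep hPc
  have : prP φ (fun t => P t ∧ t ⟨b, hb⟩ = false)
      = prP φ P - prP φ (fun t => P t ∧ t ⟨b, hb⟩ = true) := by
    rw [hsplit]; ring
  rw [this, htrue]; ring

noncomputable def Q (φ : ℕ → ℕ → ℝ) (a c : ℕ) : ℕ → ℕ → ℝ
  | 0, m' => if m' = c then 1 else 0
  | b + 1, m' =>
    if b + 1 ≤ a then (if m' = c then 1 else 0)
    else (if m' = 0 then 0 else Q φ a c b (m' - 1) * φ b (m' - 1))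
      + Q φ a c b m' * (1 - φ b m')

lemma Q_self (φ : ℕ → ℕ → ℝ) (a c b m' : ℕ) (h : b ≤ a) :
    Q φ a c b m' = if m' = c then 1 else 0 := by
  cases b with
  | zero => rfl
  | succ b => unfold Q; rw [if_pos h]

lemma Q_nonneg (φ : ℕ → ℕ → ℝ) (hφ : ∀ j m, 0 ≤ φ j m ∧ φ j m ≤ 1) (a c : ℕ) :
    ∀ b m', 0 ≤ Q φ a c b m' := by
  intro b
  induction b with
  | zero => intro m'; unfold Q; split <;> norm_num
  | succ b ih =>
    intro m'
    unfold Q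
    split
    · split <;> norm_num
    · apply add_nonneg
      · split
        · exact le_refl 0
        · exact mul_nonneg (ih _) (hφ b (m' - 1)).1
      · exact mul_nonneg (ih _) (by linarith [(hφ b m').2])

lemma prP_count (φ : ℕ → ℕ → ℝ) (a c : ℕ)
    (P : (Fin n → Bool) → Prop)
    (hPdep : ∀ t t', (∀ i : Fin n, (i : ℕ) < a → t i = t' i) → P t → P t')
    (hPc : ∀ t, P t → count1 t a = c) :
    ∀ b, a ≤ b → b ≤ n → ∀ m',
      prP φ (fun t => P t ∧ count1 t b = m') = prP φ P * Q φ a c b m' := by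
  intro b hab
  induction b, hab using Nat.le_induction with
  | base =>
    intro _ m'
    rw [Q_self φ a c a m' le_rfl]
    by_cases hm : m' = c
    · rw [if_pos hm, mul_one]
      apply prP_congr
      intro t
      exact ⟨fun h => h.1, fun h => ⟨h, by rw [hPc t h, hm]⟩⟩
    · rw [if_neg hm, mul_zero]
      unfold prP
      apply Finset.sum_eq_zero
      intro t _
      rw [if_neg]
      rintro ⟨hp, hcount⟩
      exact hm (by rw [← hcount, hPc t hp])
  | succ b hab ih =>
    intro hbn m'
    have hbn' : b ≤ n := by omega
    have hblt : b < n := by omega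
    have hsplit : prP φ (fun t => P t ∧ count1 t (b + 1) = m')
        = prP φ (fun t => (P t ∧ (m' ≠ 0 ∧ count1 t b = m' - 1)) ∧ t ⟨b, hblt⟩ = true)
          + prP φ (fun t => (P t ∧ count1 t b = m') ∧ t ⟨b, hblt⟩ = false) := by
      unfold prP
      rw [← Finset.sum_add_distrib]
      apply Finset.sum_congr rfl
      intro t _
      beta_reduce
      have hc : count1 t (b + 1) = count1 t b + (if t ⟨b, hblt⟩ = true then 1 else 0) :=
        count1_succ t b hblt
      by_cases htb : t ⟨b, hblt⟩ = true
      · rw [if_pos htb] at hc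
        have hfalse : ¬ ((P t ∧ count1 t b = m') ∧ t ⟨b, hblt⟩ = false) := by
          rintro ⟨_, hf⟩
          rw [htb] at hf
          simp at hf
        rw [if_neg hfalse, add_zero]
        by_cases hp : P t ∧ count1 t (b + 1) = m'
        · rw [if_pos hp, if_pos ⟨⟨hp.1, by omega, by
            have := hp.2
            omega⟩, htb⟩]
        · rw [if_neg hp, if_neg (fun hcon => hp ⟨hcon.1.1, by
            have h1 := hcon.1.2.1
            have h2 := hcon.1.2.2
            omega⟩)]
      · have hfb : t ⟨b, hblt⟩ = false := by simpa using htb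
        rw [if_neg htb] at hc
        have hfalse : ¬ ((P t ∧ (m' ≠ 0 ∧ count1 t b = m' - 1)) ∧ t ⟨b, hblt⟩ = true) :=
          fun hcon => htb hcon.2
        rw [if_neg hfalse, zero_add]
        by_cases hp : P t ∧ count1 t (b + 1) = m'
        · rw [if_pos hp, if_pos ⟨⟨hp.1, by
            have := hp.2
            omega⟩, hfb⟩]
        · rw [if_neg hp, if_neg (fun hcon => hp ⟨hcon.1.1, by
            have h2 := hcon.1.2
            omega⟩)]
    have htrue := prP_step_true φ b hblt (m' - 1)
        (fun t => P t ∧ (m' ≠ 0 ∧ count1 t b = m' - 1))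
        (fun t t' h hp => ⟨hPdep t t' (fun i hi => h i (lt_of_lt_of_le hi hab)) hp.1,
          hp.2.1, by rw [← count1_congr h le_rfl]; exact hp.2.2⟩)
        (fun t hp => hp.2.2)
    have hfalse' := prP_step_false φ b hblt m'
        (fun t => P t ∧ count1 t b = m')
        (fun t t' h hp => ⟨hPdep t t' (fun i hi => h i (lt_of_lt_of_le hi hab)) hp.1,
          by rw [← count1_congr h le_rfl]; exact hp.2⟩)
        (fun t hp => hp.2)
    have hQ : Q φ a c (b + 1) m'
        = (if m' = 0 then 0 else Q φ a c b (m' - 1) * φ b (m' - 1))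
          + Q φ a c b m' * (1 - φ b m') := by
      rw [show Q φ a c (b + 1) m'
          = if b + 1 ≤ a then (if m' = c then 1 else 0)
            else (if m' = 0 then 0 else Q φ a c b (m' - 1) * φ b (m' - 1))
              + Q φ a c b m' * (1 - φ b m') from rfl,
        if_neg (by omega : ¬ b + 1 ≤ a)]
    rw [hsplit, htrue, hfalse', ih hbn' m', hQ]
    by_cases hm : m' = 0
    · rw [if_pos hm]
      have hzero : prP φ (fun t => P t ∧ (m' ≠ 0 ∧ count1 t b = m' - 1)) = 0 := by
        unfold prP
        apply Finset.sum_eq_zero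
        intro t _
        rw [if_neg (fun hcon => hcon.2.1 hm)]
      rw [hzero]
      ring
    · rw [if_neg hm]
      have heq : prP φ (fun t => P t ∧ (m' ≠ 0 ∧ count1 t b = m' - 1))
          = prP φ P * Q φ a c b (m' - 1) := by
        rw [← ih hbn' (m' - 1)]
        apply prP_congr
        intro t
        exact ⟨fun h => ⟨h.1, h.2.2⟩, fun h => ⟨h.1, hm, h.2⟩⟩
      rw [heq]
      ring

lemma prP_chain (φ : ℕ → ℕ → ℝ) (r n1 : ℕ → ℕ) (l : ℕ)
    (hrmono : ∀ i < l, r i < r (i + 1)) (hrn : ∀ i ≤ l, r i ≤ n) :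
    ∀ d s, s + d = l → ∀ (a c : ℕ) (P : (Fin n → Bool) → Prop),
    (∀ t t', (∀ i : Fin n, (i : ℕ) < a → t i = t' i) → P t → P t') →
    (∀ t, P t → count1 t a = c) → a ≤ r s →
    prP φ (fun t => P t ∧ ∀ i ∈ Finset.Icc s l, count1 t (r i) = n1 i)
      = prP φ P * Q φ a c (r s) (n1 s)
        * ∏ i ∈ Finset.Ico s l, Q φ (r i) (n1 i) (r (i + 1)) (n1 (i + 1)) := by
  intro d
  induction d with
  | zero =>
    intro s hs a c P hPdep hPc has
    obtain rfl : l = s := by omega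
    rw [Finset.Ico_self, Finset.prod_empty, mul_one]
    rw [← prP_count φ a c P hPdep hPc (r l) has (hrn l le_rfl) (n1 l)]
    apply prP_congr
    intro t
    constructor
    · rintro ⟨hp, h⟩
      exact ⟨hp, h l (by simp)⟩
    · rintro ⟨hp, h⟩
      refine ⟨hp, fun i hi => ?_⟩
      simp only [Finset.mem_Icc] at hi
      obtain rfl : i = l := by omega
      exact h
  | succ d ihd =>
    intro s hs a c P hPdep hPc has
    have hsl : s < l := by omega
    have hs1 : (s + 1) + d = l := by omega
    have hrs : r s ≤ n := hrn s (by omega)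
    have hrs1 : r s ≤ r (s + 1) := le_of_lt (hrmono s hsl)
    set P' := fun t : Fin n → Bool => P t ∧ count1 t (r s) = n1 s with hP'
    have hP'dep : ∀ t t', (∀ i : Fin n, (i : ℕ) < r s → t i = t' i) → P' t → P' t' := by
      rintro t t' h ⟨hp, hcnt⟩
      exact ⟨hPdep t t' (fun i hi => h i (lt_of_lt_of_le hi has)) hp,
        by rw [← count1_congr h le_rfl]; exact hcnt⟩
    have hP'c : ∀ t, P' t → count1 t (r s) = n1 s := fun t hp => hp.2
    have hstep := ihd (s + 1) hs1 (r s) (n1 s) P' hP'dep hP'c hrs1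
    have hcongr : prP φ (fun t => P t ∧ ∀ i ∈ Finset.Icc s l, count1 t (r i) = n1 i)
        = prP φ (fun t => P' t ∧ ∀ i ∈ Finset.Icc (s + 1) l, count1 t (r i) = n1 i) := by
      apply prP_congr
      intro t
      constructor
      · rintro ⟨hp, h⟩
        exact ⟨⟨hp, h s (Finset.mem_Icc.mpr ⟨le_rfl, by omega⟩)⟩,
          fun i hi => h i (by
            simp only [Finset.mem_Icc] at hi ⊢
            omega)⟩
      · rintro ⟨⟨hp, hcnt⟩, h⟩
        refine ⟨hp, fun i hi => ?_⟩
        simp only [Finset.mem_Icc] at hi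
        by_cases hieq : i = s
        · rw [hieq]; exact hcnt
        · exact h i (Finset.mem_Icc.mpr ⟨by omega, by omega⟩)
    have hP'val : prP φ P' = prP φ P * Q φ a c (r s) (n1 s) :=
      prP_count φ a c P hPdep hPc (r s) has hrs (n1 s)
    rw [hcongr, hstep, hP'val]
    rw [Finset.prod_eq_prod_Ico_succ_bot hsl]
    ring

lemma pr_inter (φ : ℕ → ℕ → ℝ) (S T : Set (Fin n → Bool)) :
    pr φ (S ∩ T) = prP φ (fun t => t ∈ S ∧ t ∈ T) := by
  unfold pr prP
  apply Finset.sum_congr rfl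
  intro t _
  by_cases h : t ∈ S ∩ T
  · rw [if_pos h, if_pos (⟨h.1, h.2⟩ : t ∈ S ∧ t ∈ T)]
  · rw [if_neg h, if_neg (fun hc => h ⟨hc.1, hc.2⟩)]

end Thm31

open Thm31

/-- Theorem 3.1: for monitoring times `0 = r_0 < r_1 < … < r_l`
and counts `n_{1i}`, and `r_{k−1} ≤ j < r_k`,
`P(T_{j+1}=1 | N_1(j)=m_j, ∩_{i=k}^{l} {N_1(r_i)=n_{1i}})
  = φ_{j+1}(m_j) · P(N_1(r_k)=n_{1k} | N_1(j+1)=m_j+1)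
      / P(N_1(r_k)=n_{1k} | N_1(j)=m_j)`;
in particular it depends only on the next monitoring constraint. -/
theorem thm3_1 (n : ℕ) (φ : ℕ → ℕ → ℝ) (hφ : ∀ j m, 0 ≤ φ j m ∧ φ j m ≤ 1)
    (l : ℕ) (r : ℕ → ℕ) (hr0 : r 0 = 0)
    (hrmono : ∀ i < l, r i < r (i + 1)) (hrn : ∀ i ≤ l, r i ≤ n)
    (n1 : ℕ → ℕ) (k : ℕ) (hk1 : 1 ≤ k) (hkl : k ≤ l)
    (j m : ℕ) (hjlo : r (k - 1) ≤ j) (hjhi : j < r k)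
    (hpos : 0 < pr φ {t : Fin n → Bool |
        count1 t j = m ∧ ∀ i ∈ Finset.Icc k l, count1 t (r i) = n1 i}) :
    condPr φ {t : Fin n → Bool | t ⟨j, by exact lt_of_lt_of_le hjhi (hrn k hkl)⟩ = true}
        {t : Fin n → Bool |
          count1 t j = m ∧ ∀ i ∈ Finset.Icc k l, count1 t (r i) = n1 i}
      = φ j m
          * condPr φ {t : Fin n → Bool | count1 t (r k) = n1 k}
              {t : Fin n → Bool | count1 t (j + 1) = m + 1}
          / condPr φ {t : Fin n → Bool | count1 t (r k) = n1 k}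
              {t : Fin n → Bool | count1 t j = m} := by
  have hj : j < n := lt_of_lt_of_le hjhi (hrn k hkl)
  have hrkn : r k ≤ n := hrn k hkl
  have hdepm : ∀ t t' : Fin n → Bool, (∀ i : Fin n, (i : ℕ) < j → t i = t' i) →
      count1 t j = m → count1 t' j = m := fun t t' h hp => by
    rw [← count1_congr h le_rfl]; exact hp
  have hdepm' : ∀ t t' : Fin n → Bool, (∀ i : Fin n, (i : ℕ) < j + 1 → t i = t' i) →
      (count1 t j = m ∧ t ⟨j, hj⟩ = true) → (count1 t' j = m ∧ t' ⟨j, hj⟩ = true) := by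
    rintro t t' h ⟨h1, h2⟩
    refine ⟨?_, by rw [← h ⟨j, hj⟩ (Nat.lt_succ_self j)]; exact h2⟩
    rw [← count1_congr (fun i hi => h i (Nat.lt_succ_of_lt hi)) le_rfl]
    exact h1
  have hcm' : ∀ t : Fin n → Bool, (count1 t j = m ∧ t ⟨j, hj⟩ = true) →
      count1 t (j + 1) = m + 1 := fun t hp => by
    rw [count1_succ t j hj, if_pos hp.2, hp.1]
  have hdep1 : ∀ t t' : Fin n → Bool, (∀ i : Fin n, (i : ℕ) < j + 1 → t i = t' i) →
      count1 t (j + 1) = m + 1 → count1 t' (j + 1) = m + 1 := fun t t' h hp => by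
    rw [← count1_congr h le_rfl]; exact hp
  set R : ℝ := ∏ i ∈ Finset.Ico k l, Q φ (r i) (n1 i) (r (i + 1)) (n1 (i + 1)) with hR
  have hden : prP φ (fun t : Fin n → Bool =>
        count1 t j = m ∧ ∀ i ∈ Finset.Icc k l, count1 t (r i) = n1 i)
      = prP φ (fun t : Fin n → Bool => count1 t j = m) * Q φ j m (r k) (n1 k) * R :=
    prP_chain φ r n1 l hrmono hrn (l - k) k (by omega) j m _ hdepm (fun t hp => hp)
      (le_of_lt hjhi)
  have hnum : prP φ (fun t : Fin n → Bool =>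
        (count1 t j = m ∧ t ⟨j, hj⟩ = true) ∧ ∀ i ∈ Finset.Icc k l, count1 t (r i) = n1 i)
      = prP φ (fun t : Fin n → Bool => count1 t j = m ∧ t ⟨j, hj⟩ = true)
          * Q φ (j + 1) (m + 1) (r k) (n1 k) * R :=
    prP_chain φ r n1 l hrmono hrn (l - k) k (by omega) (j + 1) (m + 1) _ hdepm' hcm' hjhi
  have hstep : prP φ (fun t : Fin n → Bool => count1 t j = m ∧ t ⟨j, hj⟩ = true)
      = prP φ (fun t : Fin n → Bool => count1 t j = m) * φ j m :=
    prP_step_true φ j hj m _ hdepm (fun t hp => hp)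
  have hQm : prP φ (fun t : Fin n → Bool => count1 t j = m ∧ count1 t (r k) = n1 k)
      = prP φ (fun t : Fin n → Bool => count1 t j = m) * Q φ j m (r k) (n1 k) :=
    prP_count φ j m _ hdepm (fun t hp => hp) (r k) (le_of_lt hjhi) hrkn (n1 k)
  have hQ1 : prP φ (fun t : Fin n → Bool =>
        count1 t (j + 1) = m + 1 ∧ count1 t (r k) = n1 k)
      = prP φ (fun t : Fin n → Bool => count1 t (j + 1) = m + 1)
          * Q φ (j + 1) (m + 1) (r k) (n1 k) :=
    prP_count φ (j + 1) (m + 1) _ hdep1 (fun t hp => hp) (r k) hjhi hrkn (n1 k)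
  have E1 : pr φ ({t : Fin n → Bool | t ⟨j, lt_of_lt_of_le hjhi (hrn k hkl)⟩ = true} ∩
      {t : Fin n → Bool | count1 t j = m ∧ ∀ i ∈ Finset.Icc k l, count1 t (r i) = n1 i})
      = prP φ (fun t : Fin n → Bool => count1 t j = m) * φ j m
          * Q φ (j + 1) (m + 1) (r k) (n1 k) * R := by
    refine (pr_inter φ _ _).trans ?_
    refine (prP_congr φ (P' := fun t : Fin n → Bool =>
        (count1 t j = m ∧ t ⟨j, hj⟩ = true) ∧
          ∀ i ∈ Finset.Icc k l, count1 t (r i) = n1 i) ?_).trans ?_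
    · intro t
      exact ⟨fun h => ⟨⟨h.2.1, h.1⟩, h.2.2⟩, fun h => ⟨h.1.2, h.1.1, h.2⟩⟩
    · rw [hnum, hstep]
  have E2 : pr φ ({t : Fin n → Bool |
        count1 t j = m ∧ ∀ i ∈ Finset.Icc k l, count1 t (r i) = n1 i})
      = prP φ (fun t : Fin n → Bool => count1 t j = m) * Q φ j m (r k) (n1 k) * R :=
    (pr_eq_prP φ _).trans hden
  have E3 : pr φ ({t : Fin n → Bool | count1 t (r k) = n1 k} ∩
      {t : Fin n → Bool | count1 t (j + 1) = m + 1})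
      = prP φ (fun t : Fin n → Bool => count1 t (j + 1) = m + 1)
          * Q φ (j + 1) (m + 1) (r k) (n1 k) := by
    refine (pr_inter φ _ _).trans ?_
    refine (prP_congr φ (P' := fun t : Fin n → Bool =>
        count1 t (j + 1) = m + 1 ∧ count1 t (r k) = n1 k) ?_).trans hQ1
    intro t
    exact ⟨fun h => ⟨h.2, h.1⟩, fun h => ⟨h.2, h.1⟩⟩
  have E4 : pr φ ({t : Fin n → Bool | count1 t (j + 1) = m + 1})
      = prP φ (fun t : Fin n → Bool => count1 t (j + 1) = m + 1) := pr_eq_prP φ _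
  have E5 : pr φ ({t : Fin n → Bool | count1 t (r k) = n1 k} ∩
      {t : Fin n → Bool | count1 t j = m})
      = prP φ (fun t : Fin n → Bool => count1 t j = m) * Q φ j m (r k) (n1 k) := by
    refine (pr_inter φ _ _).trans ?_
    refine (prP_congr φ (P' := fun t : Fin n → Bool =>
        count1 t j = m ∧ count1 t (r k) = n1 k) ?_).trans hQm
    intro t
    exact ⟨fun h => ⟨h.2, h.1⟩, fun h => ⟨h.2, h.1⟩⟩
  have E6 : pr φ ({t : Fin n → Bool | count1 t j = m})
      = prP φ (fun t : Fin n → Bool => count1 t j = m) := pr_eq_prP φ _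
  rw [E2] at hpos
  unfold condPr
  rw [E1, E2, E3, E4, E5, E6]
  set p : ℝ := prP φ (fun t : Fin n → Bool => count1 t j = m) with hp
  set p1 : ℝ := prP φ (fun t : Fin n → Bool => count1 t (j + 1) = m + 1) with hp1
  set Q0 : ℝ := Q φ j m (r k) (n1 k) with hQ0
  set Q1 : ℝ := Q φ (j + 1) (m + 1) (r k) (n1 k) with hQ1'
  have pnn : 0 ≤ p := prP_nonneg φ hφ _
  have hpne : p ≠ 0 := by
    intro h
    rw [h, zero_mul, zero_mul] at hpos
    exact lt_irrefl 0 hpos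
  have hQ0ne : Q0 ≠ 0 := by
    intro h
    rw [h, mul_zero, zero_mul] at hpos
    exact lt_irrefl 0 hpos
  have hRne : R ≠ 0 := by
    intro h
    rw [h, mul_zero] at hpos
    exact lt_irrefl 0 hpos
  by_cases hphi : φ j m = 0
  · rw [hphi, mul_zero, zero_mul, zero_mul, zero_div, zero_mul, zero_div]
  · have hφpos : 0 < φ j m := lt_of_le_of_ne (hφ j m).1 (Ne.symm hphi)
    have hppos : 0 < p := lt_of_le_of_ne pnn (Ne.symm hpne)
    have hp1ne : p1 ≠ 0 := by
      have hle : prP φ (fun t : Fin n → Bool => count1 t j = m ∧ t ⟨j, hj⟩ = true) ≤ p1 :=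
        prP_mono φ hφ hcm'
      have hlt : 0 < prP φ (fun t : Fin n → Bool => count1 t j = m ∧ t ⟨j, hj⟩ = true) := by
        rw [hstep]
        exact mul_pos hppos hφpos
      intro h
      rw [h] at hle
      linarith
    field_simp
end

section
/- Under sequential conditioning on monitoring constraints ∩_{q=1}^{l} {N_1(r_q)=n_{1q}} for a restricted randomization procedure φ, if i and j lie in different inter-monitoring blocks (i.e., there is no k with r_{k−1} < i < j ≤ r_k), then T_i and T_j are conditionally uncorrelated: E(T_i T_j | ∩_q {N_1(r_q)=n_{1q}}) = E(T_i | ∩_q {N_1(r_q)=n_{1q}}) · E(T_j | ∩_q {N_1(r_q)=n_{1q}}); consequently the conditional covariance matrix Σ_{|r_l} is block diagonal with blocks corresponding to the intervals (r_{k−1}, r_k]. -/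
open Finset

def mrg {n : ℕ} (m : ℕ) (t s : Fin n → Bool) : Fin n → Bool :=
  fun i => if (i : ℕ) < m then t i else s i

lemma count1_mrg_le {n : ℕ} (m : ℕ) (t s : Fin n → Bool) {j : ℕ} (hj : j ≤ m) :
    count1 (mrg m t s) j = count1 t j := by
  unfold count1
  congr 1
  apply Finset.filter_congr
  intro x _
  refine and_congr_right fun h1 => ?_
  simp [mrg, lt_of_lt_of_le h1 hj]

lemma count1_split {n : ℕ} (u : Fin n → Bool) {m j : ℕ} (h : m ≤ j) :
    count1 u j = count1 u m +
      ((Finset.univ : Finset (Fin n)).filter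
        (fun x : Fin n => m ≤ (x : ℕ) ∧ (x : ℕ) < j ∧ u x = true)).card := by
  classical
  unfold count1
  have hdisj : Disjoint
      ((Finset.univ : Finset (Fin n)).filter (fun x : Fin n => (x : ℕ) < m ∧ u x = true))
      ((Finset.univ : Finset (Fin n)).filter
        (fun x : Fin n => m ≤ (x : ℕ) ∧ (x : ℕ) < j ∧ u x = true)) := by
    rw [Finset.disjoint_left]
    intro x hx hy
    simp only [Finset.mem_filter] at hx hy
    exact absurd hy.2.1 (not_le.mpr hx.2.1)
  rw [← Finset.card_union_of_disjoint hdisj]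
  congr 1
  ext x
  simp only [Finset.mem_union, Finset.mem_filter, Finset.mem_univ, true_and]
  constructor
  · rintro ⟨h1, h2⟩
    rcases lt_or_ge (x : ℕ) m with hm | hm
    · exact Or.inl ⟨hm, h2⟩
    · exact Or.inr ⟨hm, h1, h2⟩
  · rintro (⟨h1, h2⟩ | ⟨h1, h2, h3⟩)
    · exact ⟨lt_of_lt_of_le h1 h, h2⟩
    · exact ⟨h2, h3⟩

lemma count1_mrg_ge {n : ℕ} (m : ℕ) {t s : Fin n → Bool} (hc : count1 t m = count1 s m)
    {j : ℕ} (hj : m ≤ j) : count1 (mrg m t s) j = count1 s j := by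
  classical
  rw [count1_split (mrg m t s) hj, count1_split s hj, count1_mrg_le m t s le_rfl, hc]
  congr 1
  refine congrArg Finset.card (Finset.filter_congr ?_)
  intro x _
  refine and_congr_right fun h1 => and_congr_right fun _ => ?_
  simp [mrg, Nat.not_lt.mpr h1]

lemma seqProb_mrg_mul {n : ℕ} (φ : ℕ → ℕ → ℝ) (m : ℕ) {t s : Fin n → Bool}
    (hc : count1 t m = count1 s m) :
    seqProb φ (mrg m t s) * seqProb φ (mrg m s t) = seqProb φ t * seqProb φ s := by
  unfold seqProb
  rw [← Finset.prod_mul_distrib, ← Finset.prod_mul_distrib]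
  apply Finset.prod_congr rfl
  intro x _
  rcases lt_or_ge (x : ℕ) m with hx | hx
  · rw [show mrg m t s x = t x from if_pos hx, show mrg m s t x = s x from if_pos hx,
        count1_mrg_le m t s hx.le, count1_mrg_le m s t hx.le]
  · rw [show mrg m t s x = s x from if_neg (not_lt.mpr hx),
        show mrg m s t x = t x from if_neg (not_lt.mpr hx),
        count1_mrg_ge m hc hx, count1_mrg_ge m hc.symm hx]
    exact mul_comm _ _

lemma mem_B_mrg {n l : ℕ} {r n1 : ℕ → ℕ} {m : ℕ} {t s : Fin n → Bool}
    (hc : count1 t m = count1 s m)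
    (ht : ∀ q ∈ Finset.Icc 1 l, count1 t (r q) = n1 q)
    (hs : ∀ q ∈ Finset.Icc 1 l, count1 s (r q) = n1 q) :
    ∀ q ∈ Finset.Icc 1 l, count1 (mrg m t s) (r q) = n1 q := by
  intro q hq
  rcases le_total (r q) m with h | h
  · rw [count1_mrg_le m t s h]; exact ht q hq
  · rw [count1_mrg_ge m hc h]; exact hs q hq

lemma mrg_involutive {n : ℕ} (m : ℕ) :
    Function.Involutive (fun p : (Fin n → Bool) × (Fin n → Bool) =>
      (mrg m p.1 p.2, mrg m p.2 p.1)) := by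
  intro p
  refine Prod.ext ?_ ?_ <;> · funext x; by_cases hx : (x : ℕ) < m <;> simp [mrg, hx]

open Classical in
noncomputable def indP {n : ℕ} (φ : ℕ → ℕ → ℝ) (S : Set (Fin n → Bool))
    (t : Fin n → Bool) : ℝ :=
  if t ∈ S then seqProb φ t else 0

lemma indP_of_mem {n : ℕ} {φ : ℕ → ℕ → ℝ} {S : Set (Fin n → Bool)} {t : Fin n → Bool}
    (h : t ∈ S) : indP φ S t = seqProb φ t := if_pos h

lemma indP_of_notMem {n : ℕ} {φ : ℕ → ℕ → ℝ} {S : Set (Fin n → Bool)} {t : Fin n → Bool}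
    (h : t ∉ S) : indP φ S t = 0 := if_neg h

lemma pr_eq_sum_indP {n : ℕ} (φ : ℕ → ℕ → ℝ) (S : Set (Fin n → Bool)) :
    pr φ S = ∑ t : Fin n → Bool, indP φ S t := rfl

lemma pr_mul_pr {n : ℕ} (φ : ℕ → ℕ → ℝ) (S T : Set (Fin n → Bool)) :
    pr φ S * pr φ T =
      ∑ p : (Fin n → Bool) × (Fin n → Bool), indP φ S p.1 * indP φ T p.2 := by
  rw [pr_eq_sum_indP, pr_eq_sum_indP, Finset.sum_mul_sum]
  exact (Fintype.sum_prod_type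
    (f := fun p : (Fin n → Bool) × (Fin n → Bool) => indP φ S p.1 * indP φ T p.2)).symm


/-- under sequential conditioning on the monitoring constraints
`∩_{q=1}^{l} {N_1(r_q)=n_{1q}}`, if `i < j ≤ r_l` lie in different
inter-monitoring blocks (no `k` with `r_{k−1} < i < j ≤ r_k`), then `T_i` and
`T_j` are conditionally uncorrelated:
`E(T_i T_j | ·) = E(T_i | ·)·E(T_j | ·)`; hence the conditional covariance
matrix is block diagonal with blocks the intervals `(r_{k−1}, r_k]`. -/
theorem block_diagonal_cov (n : ℕ) (φ : ℕ → ℕ → ℝ)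
    (hφ : ∀ j m, 0 ≤ φ j m ∧ φ j m ≤ 1)
    (l : ℕ) (r : ℕ → ℕ) (hr0 : r 0 = 0)
    (hrmono : ∀ i < l, r i < r (i + 1)) (hrn : ∀ i ≤ l, r i ≤ n)
    (n1 : ℕ → ℕ)
    (i j : ℕ) (hi : 1 ≤ i) (hij : i < j) (hjrl : j ≤ r l) (hjn : j ≤ n)
    (hblocks : ¬ ∃ k, 1 ≤ k ∧ k ≤ l ∧ r (k - 1) < i ∧ j ≤ r k)
    (hpos : 0 < pr φ {t : Fin n → Bool | ∀ q ∈ Finset.Icc 1 l, count1 t (r q) = n1 q}) :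
    condPr φ
        {t : Fin n → Bool | t ⟨i - 1, by omega⟩ = true ∧ t ⟨j - 1, by omega⟩ = true}
        {t : Fin n → Bool | ∀ q ∈ Finset.Icc 1 l, count1 t (r q) = n1 q}
      = condPr φ {t : Fin n → Bool | t ⟨i - 1, by omega⟩ = true}
            {t : Fin n → Bool | ∀ q ∈ Finset.Icc 1 l, count1 t (r q) = n1 q}
          * condPr φ {t : Fin n → Bool | t ⟨j - 1, by omega⟩ = true}
              {t : Fin n → Bool | ∀ q ∈ Finset.Icc 1 l, count1 t (r q) = n1 q} := by
  classical
  -- locate the monitoring time separating the blocks of i and j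
  have hex : ∃ k, k ≤ l ∧ i ≤ r k := ⟨l, le_rfl, le_of_lt (lt_of_lt_of_le hij hjrl)⟩
  obtain ⟨hkl, hik⟩ := Nat.find_spec hex
  set k := Nat.find hex with hkdef
  have hk1 : 1 ≤ k := by
    by_contra h
    have hk0 : k = 0 := by omega
    rw [hk0, hr0] at hik; omega
  have hmin : r (k - 1) < i := by
    by_contra h
    push_neg at h
    exact Nat.find_min hex (show k - 1 < k by omega) ⟨by omega, h⟩
  have hrkj : r k < j := by
    by_contra h
    push_neg at h
    exact hblocks ⟨k, hk1, hkl, hmin, h⟩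
  have hkIcc : k ∈ Finset.Icc 1 l := Finset.mem_Icc.mpr ⟨hk1, hkl⟩
  set m := r k with hmdef
  have him : i ≤ m := hik
  have hmj : m < j := hrkj
  set i' : Fin n := ⟨i - 1, by omega⟩ with hi'
  set j' : Fin n := ⟨j - 1, by omega⟩ with hj'
  have hi'm : (i' : ℕ) < m := by simp [hi']; omega
  have hj'm : ¬ (j' : ℕ) < m := by simp [hj']; omega
  set B : Set (Fin n → Bool) :=
    {t : Fin n → Bool | ∀ q ∈ Finset.Icc 1 l, count1 t (r q) = n1 q} with hBdef
  set A : Set (Fin n → Bool) := {t : Fin n → Bool | t i' = true} with hAdef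
  set C : Set (Fin n → Bool) := {t : Fin n → Bool | t j' = true} with hCdef
  set AC : Set (Fin n → Bool) := {t : Fin n → Bool | t i' = true ∧ t j' = true} with hACdef
  -- the suffix-swap involution
  set e : ((Fin n → Bool) × (Fin n → Bool)) ≃ ((Fin n → Bool) × (Fin n → Bool)) :=
    Function.Involutive.toPerm _ (mrg_involutive (n := n) m) with hedef
  have main : ∀ p : (Fin n → Bool) × (Fin n → Bool),
      indP φ (A ∩ B) p.1 * indP φ (C ∩ B) p.2
        = indP φ (AC ∩ B) (e p).1 * indP φ B (e p).2 := by
    rintro ⟨t, s⟩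
    show indP φ (A ∩ B) t * indP φ (C ∩ B) s
        = indP φ (AC ∩ B) (mrg m t s) * indP φ B (mrg m s t)
    by_cases hts : (∀ q ∈ Finset.Icc 1 l, count1 t (r q) = n1 q) ∧
        (∀ q ∈ Finset.Icc 1 l, count1 s (r q) = n1 q)
    · obtain ⟨htB, hsB⟩ := hts
      have hc : count1 t m = count1 s m := by rw [htB k hkIcc, hsB k hkIcc]
      have h1 : mrg m t s ∈ B := mem_B_mrg hc htB hsB
      have h2 : mrg m s t ∈ B := mem_B_mrg hc.symm hsB htB
      have hvi : mrg m t s i' = t i' := if_pos hi'm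
      have hvj : mrg m t s j' = s j' := if_neg hj'm
      by_cases hA : t i' = true
      · by_cases hC : s j' = true
        · rw [indP_of_mem (show t ∈ A ∩ B from ⟨hA, htB⟩),
            indP_of_mem (show s ∈ C ∩ B from ⟨hC, hsB⟩),
            indP_of_mem (show mrg m t s ∈ AC ∩ B from
              ⟨⟨by rw [hvi]; exact hA, by rw [hvj]; exact hC⟩, h1⟩),
            indP_of_mem h2]
          exact (seqProb_mrg_mul φ m hc).symm
        · rw [indP_of_notMem (show s ∉ C ∩ B from fun h => hC h.1), mul_zero,
            indP_of_notMem (show mrg m t s ∉ AC ∩ B from fun h => by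
              exact hC (by rw [← hvj]; exact h.1.2)), zero_mul]
      · rw [indP_of_notMem (show t ∉ A ∩ B from fun h => hA h.1), zero_mul,
          indP_of_notMem (show mrg m t s ∉ AC ∩ B from fun h => by
            exact hA (by rw [← hvi]; exact h.1.1)), zero_mul]
    · have hL : indP φ (A ∩ B) t * indP φ (C ∩ B) s = 0 := by
        rcases not_and_or.mp hts with h | h
        · rw [indP_of_notMem (show t ∉ A ∩ B from fun h' => h h'.2), zero_mul]
        · rw [indP_of_notMem (show s ∉ C ∩ B from fun h' => h h'.2), mul_zero]
      rw [hL]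
      by_cases hmm : (mrg m t s ∈ B) ∧ (mrg m s t ∈ B)
      · exfalso
        obtain ⟨h1, h2⟩ := hmm
        have e1 : count1 t m = n1 k := by
          rw [← count1_mrg_le m t s le_rfl]; exact h1 k hkIcc
        have e2 : count1 s m = n1 k := by
          rw [← count1_mrg_le m s t le_rfl]; exact h2 k hkIcc
        have hc2 : count1 s m = count1 t m := e2.trans e1.symm
        refine hts ⟨fun q hq => ?_, fun q hq => ?_⟩
        · rcases le_total (r q) m with h | h
          · rw [← count1_mrg_le m t s h]; exact h1 q hq
          · rw [← count1_mrg_ge m hc2 h]; exact h2 q hq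
        · rcases le_total (r q) m with h | h
          · rw [← count1_mrg_le m s t h]; exact h2 q hq
          · rw [← count1_mrg_ge m hc2.symm h]; exact h1 q hq
      · rcases not_and_or.mp hmm with h | h
        · rw [indP_of_notMem (show mrg m t s ∉ AC ∩ B from fun h' => h h'.2), zero_mul]
        · rw [indP_of_notMem (show mrg m s t ∉ B from h), mul_zero]
  have key : pr φ (AC ∩ B) * pr φ B = pr φ (A ∩ B) * pr φ (C ∩ B) := by
    rw [pr_mul_pr, pr_mul_pr]
    exact (Fintype.sum_equiv e
      (fun p : (Fin n → Bool) × (Fin n → Bool) => indP φ (A ∩ B) p.1 * indP φ (C ∩ B) p.2)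
      (fun p : (Fin n → Bool) × (Fin n → Bool) => indP φ (AC ∩ B) p.1 * indP φ B p.2)
      main).symm
  have hBne : pr φ B ≠ 0 := ne_of_gt hpos
  show condPr φ AC B = condPr φ A B * condPr φ C B
  unfold condPr
  rw [div_mul_div_comm, div_eq_div_iff hBne (mul_ne_zero hBne hBne)]
  linear_combination (pr φ B) * key
end
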